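/- arXiv:1912.06771 — 4 statements merged into one kernel-verified Lean document; each statement's English description precedes it below -/
import Mathlib

section
/- Conversely, for every x ∈ ℂ with x ≠ ±1/√d that solves one of the h+1 equations d^{h+1}x^{2h+2} = 1 or d^{k+2}x^{2k+4} − d^{k+2}x^{2k+3} + dx − 1 = 0 (0 ≤ k ≤ h−1), the number λ = (d/(d+1))·(x + 1/(xd)) is an eigenvalue of Q_h. Moreover, for each of these equations, if x is a solution then so is 1/(xd), and x and 1/(xd) yield the same value of λ. -/
set_option maxHeartbeats 1000000

open Matrix

/-- Vertices of the complete `d`-ary tree of height `h`: words over `{0,…,d-1}`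
of length at most `h` (encoded as a level `l ≤ h` together with a word of length `l`). -/
abbrev Vtx (d h : ℕ) : Type := Σ l : Fin (h + 1), Fin l.val → Fin d

/-- The word (from the root) corresponding to a vertex. -/
def toWord {d h : ℕ} (v : Vtx d h) : List (Fin d) := List.ofFn v.2

/-- The level of a vertex, i.e. its distance from the root. -/
def lvl {d h : ℕ} (v : Vtx d h) : ℕ := v.1.val

/-- Adjacency in the tree: one vertex is obtained from the other by appending one letter. -/
def adj {d h : ℕ} (v w : Vtx d h) : Prop :=
  (∃ a : Fin d, toWord w = toWord v ++ [a]) ∨ ∃ a : Fin d, toWord v = toWord w ++ [a]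

-- The transition matrix of the simple random walk on the complete `d`-ary tree.
open scoped Classical in
noncomputable def Q (d h : ℕ) : Matrix (Vtx d h) (Vtx d h) ℂ := fun v w =>
  if adj v w then 1 / (d + 1)
  else if v = w ∧ lvl v = 0 then 1 / (d + 1)
  else if v = w ∧ lvl v = h then (d : ℂ) / (d + 1)
  else 0

/-- `inSub v c w` means that `w` belongs to the complete subtree `T_c^v` rooted at the
child of `v` labelled `c`. -/
def inSub {d h : ℕ} (v : Vtx d h) (c : Fin d) (w : Vtx d h) : Prop :=
  (toWord v ++ [c]) <+: toWord w

namespace Tree0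

variable {d h : ℕ}

lemma toWord_length (v : Vtx d h) : (toWord v).length = lvl v := by
  simp [toWord, lvl]

lemma lvl_le (v : Vtx d h) : lvl v ≤ h := by
  have := v.1.isLt; unfold lvl; omega

lemma toWord_injective : Function.Injective (toWord (d := d) (h := h)) := by
  rintro ⟨l, f⟩ ⟨l', f'⟩ hw
  have hl : l = l' := by
    have h1 := congrArg List.length hw
    simp only [toWord, List.length_ofFn] at h1
    exact Fin.ext h1
  subst hl
  simp only [toWord] at hw
  obtain rfl := List.ofFn_inj.mp hw
  rfl

/-- The child of `v` labelled `a`. -/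
def child (v : Vtx d h) (hv : lvl v < h) (a : Fin d) : Vtx d h :=
  ⟨⟨lvl v + 1, Nat.succ_lt_succ hv⟩, Fin.snoc v.2 a⟩

lemma lvl_child (v : Vtx d h) (hv : lvl v < h) (a : Fin d) :
    lvl (child v hv a) = lvl v + 1 := rfl

lemma toWord_child (v : Vtx d h) (hv : lvl v < h) (a : Fin d) :
    toWord (child v hv a) = toWord v ++ [a] := by
  simp only [toWord, child, lvl]
  rw [List.ofFn_succ']
  simp only [List.concat_eq_append, Fin.snoc_last]
  congr 1
  exact List.ofFn_inj.mpr (funext fun i => by simp)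

/-- The parent of `v`. -/
def parent (v : Vtx d h) (h0 : 0 < lvl v) : Vtx d h :=
  ⟨⟨lvl v - 1, Nat.lt_succ_of_le (Nat.le_trans (Nat.sub_le _ _) (lvl_le v))⟩,
    fun i => v.2 ⟨i.1, Nat.lt_of_lt_of_le i.2 (Nat.sub_le _ _)⟩⟩

lemma lvl_parent (v : Vtx d h) (h0 : 0 < lvl v) : lvl (parent v h0) = lvl v - 1 := rfl

lemma parent_spec (v : Vtx d h) (h0 : 0 < lvl v) :
    ∃ a : Fin d, toWord v = toWord (parent v h0) ++ [a] := by
  obtain ⟨⟨l, hl⟩, f⟩ := v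
  simp only [lvl] at h0
  obtain ⟨l', rfl⟩ : ∃ l', l = l' + 1 := ⟨l - 1, by omega⟩
  refine ⟨f ⟨l', Nat.lt_succ_self l'⟩, ?_⟩
  simp only [toWord, parent, lvl]
  rw [List.ofFn_succ' f]
  simp only [List.concat_eq_append]
  congr 1

lemma child_inj (v : Vtx d h) (hv : lvl v < h) {a b : Fin d}
    (e : child v hv a = child v hv b) : a = b := by
  have := congrArg toWord e
  rw [toWord_child, toWord_child] at this
  simpa using this

lemma eq_parent_of_child {v w : Vtx d h} {hw : lvl w < h} {a : Fin d}
    (e : v = child w hw a) : ∃ h0 : 0 < lvl v, w = parent v h0 := by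
  have h0 : 0 < lvl v := by rw [e, lvl_child]; omega
  refine ⟨h0, ?_⟩
  obtain ⟨b, hb⟩ := parent_spec v h0
  have h1 : toWord v = toWord w ++ [a] := by rw [e, toWord_child]
  rw [h1] at hb
  have := List.append_inj_left' hb.symm rfl
  exact toWord_injective this.symm

lemma child_parent (v : Vtx d h) (h0 : 0 < lvl v) :
    ∃ (hp : lvl (parent v h0) < h) (a : Fin d), v = child (parent v h0) hp a := by
  have hp : lvl (parent v h0) < h := by
    have := lvl_le v; rw [lvl_parent]; omega
  obtain ⟨a, ha⟩ := parent_spec v h0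
  exact ⟨hp, a, toWord_injective (by rw [toWord_child]; exact ha)⟩

lemma adj_iff (v w : Vtx d h) : adj v w ↔
    (∃ (hv : lvl v < h) (a : Fin d), w = child v hv a) ∨
    (∃ (h0 : 0 < lvl v), w = parent v h0) := by
  constructor
  · rintro (⟨a, ha⟩ | ⟨a, ha⟩)
    · have hv : lvl v < h := by
        have h1 := congrArg List.length ha
        simp only [List.length_append, List.length_cons, List.length_nil,
          toWord_length] at h1
        have := lvl_le w; omega
      exact Or.inl ⟨hv, a, toWord_injective (by rw [toWord_child]; exact ha)⟩
    · have hw : lvl w < h := by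
        have h1 := congrArg List.length ha
        simp only [List.length_append, List.length_cons, List.length_nil,
          toWord_length] at h1
        have := lvl_le v; omega
      exact Or.inr (eq_parent_of_child
        (toWord_injective (ha.trans (toWord_child w hw a).symm) : v = child w hw a))
  · rintro (⟨hv, a, rfl⟩ | ⟨h0, rfl⟩)
    · exact Or.inl ⟨a, toWord_child v hv a⟩
    · obtain ⟨a, ha⟩ := parent_spec v h0
      exact Or.inr ⟨a, ha⟩

open scoped Classical in
lemma Q_decomp (hh : 1 ≤ h) (f : Vtx d h → ℂ) (v w : Vtx d h) :
    Q d h v w * f w =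
      (if ∃ (hv : lvl v < h) (a : Fin d), w = child v hv a then (1/((d:ℂ)+1)) * f w else 0)
      + (if ∃ h0 : 0 < lvl v, w = parent v h0 then (1/((d:ℂ)+1)) * f w else 0)
      + (if v = w ∧ lvl v = 0 then (1/((d:ℂ)+1)) * f w else 0)
      + (if v = w ∧ lvl v = h then ((d:ℂ)/(d+1)) * f w else 0) := by
  by_cases c1 : ∃ (hv : lvl v < h) (a : Fin d), w = child v hv a
  · have hadj : adj v w := (adj_iff v w).mpr (Or.inl c1)
    obtain ⟨hv, a, rfl⟩ := c1
    have hne : ¬(v = child v hv a) := fun e => by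
      have := congrArg lvl e; rw [lvl_child] at this; omega
    have c2 : ¬∃ h0 : 0 < lvl v, child v hv a = parent v h0 := by
      rintro ⟨h0, e⟩
      have := congrArg lvl e; rw [lvl_child, lvl_parent] at this; omega
    simp only [Q, if_pos hadj, if_pos (⟨hv, a, rfl⟩ : ∃ (hv' : lvl v < h) (b : Fin d),
        child v hv a = child v hv' b), if_neg c2,
      if_neg (fun e => hne e.1 : ¬(v = child v hv a ∧ lvl v = 0)),
      if_neg (fun e => hne e.1 : ¬(v = child v hv a ∧ lvl v = h))]
    ring
  · by_cases c2 : ∃ h0 : 0 < lvl v, w = parent v h0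
    · have hadj : adj v w := (adj_iff v w).mpr (Or.inr c2)
      obtain ⟨h0, rfl⟩ := c2
      have hne : ¬(v = parent v h0) := fun e => by
        have := congrArg lvl e; rw [lvl_parent] at this; omega
      simp only [Q, if_pos hadj, if_neg c1,
        if_pos (⟨h0, rfl⟩ : ∃ h0' : 0 < lvl v, parent v h0 = parent v h0'),
        if_neg (fun e => hne e.1 : ¬(v = parent v h0 ∧ lvl v = 0)),
        if_neg (fun e => hne e.1 : ¬(v = parent v h0 ∧ lvl v = h))]
      rw [if_pos (show ∃ _ : 0 < lvl v, True from ⟨h0, trivial⟩)]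
      ring
    · have hadj : ¬ adj v w := fun ha => by
        rcases (adj_iff v w).mp ha with hc | hc
        exacts [c1 hc, c2 hc]
      by_cases c3 : v = w ∧ lvl v = 0
      · have c4 : ¬(v = w ∧ lvl v = h) := fun e => by omega
        simp only [Q, if_neg hadj, if_neg c1, if_neg c2, if_pos c3, if_neg c4]
        ring
      · by_cases c4 : v = w ∧ lvl v = h
        · simp only [Q, if_neg hadj, if_neg c1, if_neg c2, if_neg c3, if_pos c4]; ring
        · simp only [Q, if_neg hadj, if_neg c1, if_neg c2, if_neg c3, if_neg c4]; ring

end Tree0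

namespace Tree0

variable {d h : ℕ}

open scoped Classical in
lemma sumT1 (f : Vtx d h → ℂ) (v : Vtx d h) (c : ℂ) :
    ∑ w : Vtx d h, (if ∃ (hv : lvl v < h) (a : Fin d), w = child v hv a then c * f w else 0)
      = if hv : lvl v < h then c * ∑ a : Fin d, f (child v hv a) else 0 := by
  by_cases hv : lvl v < h
  · rw [dif_pos hv, Finset.mul_sum, ← Finset.sum_filter]
    have himg : Finset.univ.filter
          (fun w => ∃ (hv' : lvl v < h) (a : Fin d), w = child v hv' a)
        = Finset.image (child v hv) Finset.univ := by
      ext w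
      simp only [Finset.mem_filter, Finset.mem_univ, true_and, Finset.mem_image]
      constructor
      · rintro ⟨hv', a, rfl⟩; exact ⟨a, rfl⟩
      · rintro ⟨a, rfl⟩; exact ⟨hv, a, rfl⟩
    rw [himg, Finset.sum_image (fun a _ b _ e => child_inj v hv e)]
  · rw [dif_neg hv]
    exact Finset.sum_eq_zero (fun w _ => if_neg (fun ⟨hv', _⟩ => hv hv'))

open scoped Classical in
lemma sumT2 (f : Vtx d h → ℂ) (v : Vtx d h) (c : ℂ) :
    ∑ w : Vtx d h, (if ∃ h0 : 0 < lvl v, w = parent v h0 then c * f w else 0)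
      = if h0 : 0 < lvl v then c * f (parent v h0) else 0 := by
  by_cases h0 : 0 < lvl v
  · rw [dif_pos h0]
    have key : ∀ w : Vtx d h,
        (if ∃ h0' : 0 < lvl v, w = parent v h0' then c * f w else 0)
          = if w = parent v h0 then c * f w else 0 := fun w =>
      if_congr ⟨fun ⟨h0', e⟩ => e, fun e => ⟨h0, e⟩⟩ rfl rfl
    rw [Finset.sum_congr rfl (fun w _ => key w),
      Finset.sum_ite_eq' Finset.univ (parent v h0) (fun w => c * f w),
      if_pos (Finset.mem_univ _)]
  · rw [dif_neg h0]
    exact Finset.sum_eq_zero (fun w _ => if_neg (fun ⟨h0', _⟩ => h0 h0'))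

open scoped Classical in
lemma sumDiag (f : Vtx d h → ℂ) (v : Vtx d h) (c : ℂ) (t : ℕ) :
    ∑ w : Vtx d h, (if v = w ∧ lvl v = t then c * f w else 0)
      = if lvl v = t then c * f v else 0 := by
  by_cases ht : lvl v = t
  · rw [if_pos ht]
    have key : ∀ w : Vtx d h,
        (if v = w ∧ lvl v = t then c * f w else 0) = if w = v then c * f w else 0 :=
      fun w => if_congr ⟨fun ⟨e, _⟩ => e.symm, fun e => ⟨e.symm, ht⟩⟩ rfl rfl
    rw [Finset.sum_congr rfl (fun w _ => key w),
      Finset.sum_ite_eq' Finset.univ v (fun w => c * f w), if_pos (Finset.mem_univ _)]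
  · rw [if_neg ht]
    exact Finset.sum_eq_zero (fun w _ => if_neg (fun e => ht e.2))

open scoped Classical in
lemma mulVec_Q (hh : 1 ≤ h) (f : Vtx d h → ℂ) (v : Vtx d h) :
    (Q d h).mulVec f v =
      (if hv : lvl v < h then (1/((d:ℂ)+1)) * ∑ a : Fin d, f (child v hv a)
        else ((d:ℂ)/(d+1)) * f v)
      + (if h0 : 0 < lvl v then (1/((d:ℂ)+1)) * f (parent v h0)
        else (1/((d:ℂ)+1)) * f v) := by
  have hQ : (Q d h).mulVec f v = ∑ w, Q d h v w * f w := rfl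
  rw [hQ, Finset.sum_congr rfl (fun w _ => Q_decomp hh f v w),
    Finset.sum_add_distrib, Finset.sum_add_distrib, Finset.sum_add_distrib,
    sumT1 f v, sumT2 f v, sumDiag f v _ 0, sumDiag f v _ h]
  have hle := lvl_le v
  split_ifs <;> try ring
  all_goals exfalso; omega

end Tree0

open Tree0

/-- Conversely, each solution x ≠ ±1/√d of one of the h+1 equations gives an eigenvalue
λ = (d/(d+1))(x + 1/(xd)) of `Q d h`; moreover each equation is stable under
x ↦ 1/(xd) and both x and 1/(xd) give the same λ. -/
theorem stmt_2 (d h : ℕ) (hd : 2 ≤ d) (hh : 1 ≤ h) (x : ℂ)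
    (hx1 : x ≠ ((Real.sqrt d : ℝ) : ℂ)⁻¹) (hx2 : x ≠ -((Real.sqrt d : ℝ) : ℂ)⁻¹)
    (hsol : (d : ℂ) ^ (h + 1) * x ^ (2 * h + 2) = 1 ∨
      ∃ k, k ≤ h - 1 ∧
        (d : ℂ) ^ (k + 2) * x ^ (2 * k + 4) - (d : ℂ) ^ (k + 2) * x ^ (2 * k + 3)
          + d * x - 1 = 0) :
    Module.End.HasEigenvalue (Matrix.toLin' (Q d h))
      (((d : ℂ) / (d + 1)) * (x + 1 / (x * d))) ∧
    ((d : ℂ) ^ (h + 1) * x ^ (2 * h + 2) = 1 →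
      (d : ℂ) ^ (h + 1) * (1 / (x * d)) ^ (2 * h + 2) = 1) ∧
    (∀ k, k ≤ h - 1 →
      (d : ℂ) ^ (k + 2) * x ^ (2 * k + 4) - (d : ℂ) ^ (k + 2) * x ^ (2 * k + 3)
        + d * x - 1 = 0 →
      (d : ℂ) ^ (k + 2) * (1 / (x * d)) ^ (2 * k + 4)
        - (d : ℂ) ^ (k + 2) * (1 / (x * d)) ^ (2 * k + 3) + d * (1 / (x * d)) - 1 = 0) ∧
    ((d : ℂ) / (d + 1)) * (x + 1 / (x * d))
      = ((d : ℂ) / (d + 1)) * ((1 / (x * d)) + 1 / ((1 / (x * d)) * d)) := by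
  have hd0 : (d : ℂ) ≠ 0 := Nat.cast_ne_zero.mpr (by omega)
  have hd1 : (d : ℂ) + 1 ≠ 0 := by
    intro e
    have : ((d + 1 : ℕ) : ℂ) = 0 := by push_cast; exact e
    exact absurd (Nat.cast_eq_zero.mp this) (by omega)
  have hx0 : x ≠ 0 := by
    rintro rfl
    rcases hsol with hs | ⟨k, hk, hs⟩
    · rw [zero_pow (by omega)] at hs; simp at hs
    · rw [zero_pow (by omega), zero_pow (by omega)] at hs; simp at hs
  have hxd0 : x * (d : ℂ) ≠ 0 := mul_ne_zero hx0 hd0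
  -- d * x^2 ≠ 1 from hx1, hx2
  have hs2 : ((Real.sqrt d : ℝ) : ℂ) ^ 2 = (d : ℂ) := by
    rw [← Complex.ofReal_pow, Real.sq_sqrt (by positivity : (0:ℝ) ≤ (d : ℝ))]
    norm_num
  have hts : (((Real.sqrt d : ℝ) : ℂ)⁻¹) ^ 2 * (d : ℂ) = 1 := by
    rw [inv_pow, hs2]
    exact inv_mul_cancel₀ hd0
  have hdx2 : (d : ℂ) * x ^ 2 ≠ 1 := by
    intro e
    have hsuff : (d : ℂ) * ((x - ((Real.sqrt d : ℝ) : ℂ)⁻¹) * (x + ((Real.sqrt d : ℝ) : ℂ)⁻¹)) = 0 := by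
      linear_combination e - hts
    rcases mul_eq_zero.mp hsuff with e0 | e0
    · exact hd0 e0
    rcases mul_eq_zero.mp e0 with e1 | e1
    · exact hx1 (sub_eq_zero.mp e1)
    · exact hx2 (eq_neg_of_add_eq_zero_left e1)
  set y : ℂ := 1 / (x * d) with hy
  have hy0 : y ≠ 0 := by
    rw [hy]; exact div_ne_zero one_ne_zero hxd0
  have hxy : x * y * (d : ℂ) = 1 := by rw [hy]; field_simp
  have hxney : x ≠ y := by
    intro e
    rw [← e] at hxy
    exact hdx2 (by linear_combination hxy)
  refine ⟨?_, ?_, ?_, ?_⟩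
  · -- the eigenvalue
    rcases hsol with hs | ⟨k, hk, hs⟩
    · -- first equation: eigenvector depends only on level
      have hdpow : ((d : ℂ)) ^ (h + 1) ≠ 1 := by
        intro e
        have h1 : ((d ^ (h+1) : ℕ) : ℂ) = ((1 : ℕ) : ℂ) := by push_cast; simpa using e
        have h2 : d ^ (h+1) = 1 := Nat.cast_injective h1
        have := Nat.one_lt_pow (a := d) (n := h+1) (by omega) (by omega)
        omega
      have hxne1 : x ≠ 1 := by
        rintro rfl
        rw [one_pow, mul_one] at hs
        exact hdpow hs
      have hyne1 : y ≠ 1 := by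
        intro e
        rw [e, mul_one] at hxy
        have h2 : (x * (d:ℂ)) ^ (2*h+2) = 1 := by rw [hxy]; exact one_pow _
        exact hdpow (by linear_combination h2 - (d:ℂ)^(h+1) * hs)
      have heq : x ^ (h+1) = y ^ (h+1) := by
        have hp : (x * y * (d : ℂ)) ^ (h + 1) = 1 := by rw [hxy]; exact one_pow _
        linear_combination y^(h+1) * hs - x^(h+1) * hp
      set f : Vtx d h → ℂ :=
        fun v => y^h * (y-1) * x^(lvl v) - x^h * (x-1) * y^(lvl v) with hf
      refine Module.End.hasEigenvalue_of_hasEigenvector (x := f) ⟨?_, ?_⟩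
      · rw [Module.End.mem_eigenspace_iff, Matrix.toLin'_apply]
        funext v
        rw [mulVec_Q hh f v, Pi.smul_apply, smul_eq_mul]
        have hle := lvl_le v
        by_cases hv : lvl v < h
        · rw [dif_pos hv]
          have hsum : ∑ a : Fin d, f (child v hv a)
              = (d:ℂ) * (y^h * (y-1) * x^(lvl v + 1) - x^h * (x-1) * y^(lvl v + 1)) := by
            simp only [hf, lvl_child, Finset.sum_const, Finset.card_univ,
              Fintype.card_fin, nsmul_eq_mul]
          rw [hsum]
          by_cases h0 : 0 < lvl v
          · rw [dif_pos h0]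
            obtain ⟨j, hj⟩ : ∃ j, lvl v = j + 1 := ⟨lvl v - 1, by omega⟩
            have hfp : f (parent v h0) = y^h * (y-1) * x^j - x^h * (x-1) * y^j := by
              simp only [hf, lvl_parent, hj, Nat.add_sub_cancel]
            rw [hfp]
            simp only [hf, hj]
            linear_combination (-(1/((d:ℂ)+1)) * (y^h*(y-1)*x^j - x^h*(x-1)*y^j)) * hxy
          · rw [dif_neg h0]
            have h00 : lvl v = 0 := by omega
            simp only [hf, h00, pow_zero, pow_one, mul_one]
            linear_combination (1/((d:ℂ)+1)) * ((d:ℂ)*x + d*y - (d:ℂ) - 1) * heq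
              + (1/((d:ℂ)+1)) * (y^h - x^h) * hxy
        · rw [dif_neg hv]
          have hvh : lvl v = h := by omega
          have h0 : 0 < lvl v := by omega
          rw [dif_pos h0]
          obtain ⟨m, hm⟩ : ∃ m, h = m + 1 := ⟨h - 1, by omega⟩
          have hfp : f (parent v h0) = y^h * (y-1) * x^m - x^h * (x-1) * y^m := by
            simp only [hf, lvl_parent, hvh, hm, Nat.add_sub_cancel]
          rw [hfp]
          simp only [hf, hvh, hm]
          linear_combination (-(1/((d:ℂ)+1))
            * (y^(m+1)*(y-1)*x^m - x^(m+1)*(x-1)*y^m)) * hxy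
      · -- f ≠ 0
        intro hf0
        have hroot : f ⟨⟨0, by omega⟩, fun i => i.elim0⟩ = 0 := by rw [hf0]; rfl
        have hv1 : f ⟨⟨1, by omega⟩, fun _ => ⟨0, by omega⟩⟩ = 0 := by rw [hf0]; rfl
        simp only [hf] at hroot hv1
        have hl0 : lvl (⟨⟨0, by omega⟩, fun i => i.elim0⟩ : Vtx d h) = 0 := rfl
        have hl1 : lvl (⟨⟨1, by omega⟩, fun _ => ⟨0, by omega⟩⟩ : Vtx d h) = 1 := rfl
        rw [hl0] at hroot
        rw [hl1] at hv1
        simp only [pow_zero, pow_one, mul_one] at hroot hv1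
        have hkey : y^h * (y - 1) * (x - y) = 0 := by
          linear_combination hv1 - y * hroot
        rcases mul_eq_zero.mp hkey with e0 | e0
        · rcases mul_eq_zero.mp e0 with e1 | e1
          · exact pow_ne_zero h hy0 e1
          · exact hyne1 (by linear_combination e1)
        · exact hxney (by linear_combination e0)
    · -- second family
      classical
      have hk1 : k + 1 ≤ h := by omega
      set m : ℕ := h - k - 1 with hmdef
      have hmk : m + k + 1 = h := by omega
      set c0 : Fin d := ⟨0, by omega⟩ with hc0
      set c1 : Fin d := ⟨1, by omega⟩ with hc1
      set u : Vtx d h := ⟨⟨m, by omega⟩, fun _ => c0⟩ with hudef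
      have hlvlu : lvl u = m := rfl
      have hulen : (toWord u).length = m := by rw [toWord_length, hlvlu]
      have huh : lvl u < h := by omega
      have Llen : ∀ (c : Fin d) (w : Vtx d h),
          (toWord u ++ [c]) <+: toWord w → m + 1 ≤ lvl w := by
        intro c w hp
        have h1 := hp.length_le
        rw [List.length_append, hulen, toWord_length] at h1
        simpa using h1
      have Lnotu : ∀ c : Fin d, ¬ (toWord u ++ [c]) <+: toWord u := by
        intro c hp
        have := Llen c u hp
        rw [hlvlu] at this
        omega
      have Lchild : ∀ (c : Fin d) (v : Vtx d h) (hv : lvl v < h) (a : Fin d),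
          ((toWord u ++ [c]) <+: toWord (child v hv a)) ↔
          ((toWord u ++ [c]) <+: toWord v ∨ (v = u ∧ a = c)) := by
        intro c v hv a
        rw [toWord_child]
        constructor
        · intro hp
          rcases List.prefix_concat_iff.mp hp with heq | hpre
          · obtain ⟨e1, e2⟩ := List.append_inj' heq rfl
            refine Or.inr ⟨(toWord_injective e1).symm, ?_⟩
            have : c = a := by simpa using e2
            exact this.symm
          · exact Or.inl hpre
        · rintro (hp | ⟨rfl, rfl⟩)
          · exact hp.trans (List.prefix_append _ _)
          · exact List.prefix_rfl
      have Lparent : ∀ (c : Fin d) (v : Vtx d h) (h0 : 0 < lvl v),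
          ((toWord u ++ [c]) <+: toWord (parent v h0)) ↔
          ((toWord u ++ [c]) <+: toWord v ∧ m + 1 < lvl v) := by
        intro c v h0
        obtain ⟨a, ha⟩ := parent_spec v h0
        constructor
        · intro hp
          have h1 : (toWord u ++ [c]) <+: toWord v := by
            rw [ha]; exact hp.trans (List.prefix_append _ _)
          have h2 := hp.length_le
          rw [List.length_append, hulen, toWord_length, lvl_parent] at h2
          simp only [List.length_cons, List.length_nil] at h2
          exact ⟨h1, by omega⟩
        · rintro ⟨hp, hlt⟩
          rw [ha] at hp
          rcases List.prefix_concat_iff.mp hp with heq | hpre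
          · exfalso
            have h2 := congrArg List.length heq
            rw [List.length_append, List.length_append, hulen, toWord_length,
              lvl_parent] at h2
            simp only [List.length_cons, List.length_nil] at h2
            omega
          · exact hpre
      have Luniq : ∀ (v : Vtx d h) (c : Fin d),
          (toWord u ++ [c]) <+: toWord v → lvl v = m + 1 → v = child u huh c := by
        intro v c hp he
        apply toWord_injective
        rw [toWord_child]
        refine (hp.eq_of_length ?_).symm
        rw [List.length_append, hulen, toWord_length, he]
        simp
      have hboth : ∀ w : Vtx d h, (toWord u ++ [c0]) <+: toWord w →
          (toWord u ++ [c1]) <+: toWord w → False := by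
        intro w q0 q1
        have hle : (toWord u ++ [c0]).length ≤ (toWord u ++ [c1]).length := by simp
        have h1 := List.prefix_of_prefix_length_le q0 q1 hle
        have h2 := h1.eq_of_length (by simp)
        have h3 : c0 = c1 := by simpa using List.append_inj' h2 rfl |>.2
        have : (0 : ℕ) = 1 := congrArg Fin.val h3
        omega
      set g : ℕ → ℂ := fun j => (d:ℂ) * x^2 * x^j - y^j with hg
      set f : Vtx d h → ℂ := fun w =>
        ((if (toWord u ++ [c0]) <+: toWord w then (1:ℂ) else 0)
          - (if (toWord u ++ [c1]) <+: toWord w then (1:ℂ) else 0))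
        * g (lvl w - (m+1)) with hf
      have hfval : ∀ (w : Vtx d h) (c : Fin d) (s : ℂ),
          ((c = c0 ∧ s = 1) ∨ (c = c1 ∧ s = -1)) → (toWord u ++ [c]) <+: toWord w →
          f w = s * g (lvl w - (m+1)) := by
        rintro w c s (⟨rfl, rfl⟩ | ⟨rfl, rfl⟩) hp
        · have hn : ¬ (toWord u ++ [c1]) <+: toWord w := fun h2 => hboth w hp h2
          simp [hf, hp, hn]
        · have hn : ¬ (toWord u ++ [c0]) <+: toWord w := fun h2 => hboth w h2 hp
          simp [hf, hp, hn]
      have hfzero : ∀ w : Vtx d h, ¬ (toWord u ++ [c0]) <+: toWord w →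
          ¬ (toWord u ++ [c1]) <+: toWord w → f w = 0 := by
        intro w n0 n1; simp [hf, n0, n1]
      have hfu : f u = 0 := hfzero u (Lnotu c0) (Lnotu c1)
      refine Module.End.hasEigenvalue_of_hasEigenvector (x := f) ⟨?_, ?_⟩
      · rw [Module.End.mem_eigenspace_iff, Matrix.toLin'_apply]
        have main : ∀ (c : Fin d) (s : ℂ), ((c = c0 ∧ s = 1) ∨ (c = c1 ∧ s = -1)) →
            ∀ v : Vtx d h, (toWord u ++ [c]) <+: toWord v →
            ((if hv : lvl v < h then (1/((d:ℂ)+1)) * ∑ a : Fin d, f (child v hv a)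
              else ((d:ℂ)/(d+1)) * f v)
            + (if h0 : 0 < lvl v then (1/((d:ℂ)+1)) * f (parent v h0)
              else (1/((d:ℂ)+1)) * f v))
            = ((d:ℂ)/(↑d+1)) * (x + y) * f v := by
          intro c s hcs v hq
          have hle := lvl_le v
          have hsub : m + 1 ≤ lvl v := Llen c v hq
          have h0 : 0 < lvl v := by omega
          have hfv : f v = s * g (lvl v - (m+1)) := hfval v c s hcs hq
          have hparu : lvl v = m + 1 → f (parent v h0) = 0 := by
            intro hm1
            have hveq : v = child u huh c := Luniq v c hq hm1
            obtain ⟨h0', he⟩ := eq_parent_of_child hveq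
            exact ((congrArg f he).symm.trans hfu : f (parent v h0) = 0)
          have hparin : m + 1 < lvl v → f (parent v h0) = s * g (lvl v - 1 - (m+1)) := by
            intro hlt
            have hpp : (toWord u ++ [c]) <+: toWord (parent v h0) :=
              (Lparent c v h0).mpr ⟨hq, hlt⟩
            have := hfval (parent v h0) c s hcs hpp
            rwa [lvl_parent] at this
          rw [dif_pos h0]
          by_cases hv : lvl v < h
          · rw [dif_pos hv]
            have hchild : ∀ a : Fin d, f (child v hv a) = s * g (lvl v + 1 - (m+1)) := by
              intro a
              have hpc : (toWord u ++ [c]) <+: toWord (child v hv a) :=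
                (Lchild c v hv a).mpr (Or.inl hq)
              have := hfval (child v hv a) c s hcs hpc
              rwa [lvl_child] at this
            have hsum : ∑ a : Fin d, f (child v hv a)
                = (d:ℂ) * (s * g (lvl v + 1 - (m+1))) := by
              rw [Finset.sum_congr rfl fun a _ => hchild a, Finset.sum_const,
                Finset.card_univ, Fintype.card_fin, nsmul_eq_mul]
            rw [hsum, hfv]
            by_cases hm1 : lvl v = m + 1
            · rw [hparu hm1, show lvl v - (m+1) = 0 by omega,
                show lvl v + 1 - (m+1) = 1 by omega]
              simp only [hg]
              linear_combination (-(s * (d:ℂ) * x / ((d:ℂ)+1))) * hxy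
            · rw [hparin (by omega)]
              obtain ⟨j, hj⟩ : ∃ j, lvl v - (m+1) = j + 1 := ⟨lvl v - (m+1) - 1, by omega⟩
              rw [show lvl v - 1 - (m+1) = j by omega, hj,
                show lvl v + 1 - (m+1) = j + 2 by omega]
              simp only [hg]
              linear_combination (-(s/((d:ℂ)+1)) * ((d:ℂ)*x^2*x^j - y^j)) * hxy
          · rw [dif_neg hv]
            have hlvh : lvl v = h := by omega
            by_cases hm1 : lvl v = m + 1
            · have hk0 : k = 0 := by omega
              subst hk0
              norm_num at hs
              rw [hfv, hparu hm1, show lvl v - (m+1) = 0 by omega]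
              simp only [hg]
              apply mul_left_cancel₀ (mul_ne_zero hx0 hd0 : x * (d:ℂ) ≠ 0)
              linear_combination (-(s * (d:ℂ) / ((d:ℂ)+1))) * hs
                + (-(s * (d:ℂ) * ((d:ℂ)*x^2 - 1) / ((d:ℂ)+1))) * hxy
            · have hjk : lvl v - (m+1) = k := by omega
              obtain ⟨k', hk'⟩ : ∃ k', k = k' + 1 := ⟨k - 1, by omega⟩
              subst hk'
              rw [hfv, hparin (by omega), hjk,
                show lvl v - 1 - (m+1) = k' by omega]
              simp only [hg]
              have hpk : (x * y * (d:ℂ))^k' = 1 := by rw [hxy]; exact one_pow _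
              apply mul_left_cancel₀ (show x^2*(d:ℂ)*x^k'*(d:ℂ)^k' ≠ 0 from
                mul_ne_zero (mul_ne_zero (mul_ne_zero (pow_ne_zero _ hx0) hd0)
                  (pow_ne_zero _ hx0)) (pow_ne_zero _ hd0))
              linear_combination (-(s/((d:ℂ)+1))) * hs
                + (-(s/((d:ℂ)+1)) * (-1 - x*(d:ℂ)*(y-1)*(x*y*(d:ℂ))^k'
                  + x^2*(d:ℂ)*x^k'*(d:ℂ)^k'*((d:ℂ)*x^2*x^k' - y^k'))) * hxy
                + (-(s/((d:ℂ)+1)) * (-(x*(d:ℂ)*(y-1)))) * hpk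
        funext v
        rw [mulVec_Q hh f v, Pi.smul_apply, smul_eq_mul]
        by_cases hq0 : (toWord u ++ [c0]) <+: toWord v
        · exact main c0 1 (Or.inl ⟨rfl, rfl⟩) v hq0
        · by_cases hq1 : (toWord u ++ [c1]) <+: toWord v
          · exact main c1 (-1) (Or.inr ⟨rfl, rfl⟩) v hq1
          · -- f v = 0 and all neighbours contribute 0
            have hfv : f v = 0 := hfzero v hq0 hq1
            have hpar0 : ∀ h0 : 0 < lvl v, f (parent v h0) = 0 := by
              intro h0
              refine hfzero _ (fun hp => hq0 ?_) (fun hp => hq1 ?_)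
              · exact ((Lparent c0 v h0).mp hp).1
              · exact ((Lparent c1 v h0).mp hp).1
            rw [hfv, mul_zero]
            by_cases hv : lvl v < h
            · rw [dif_pos hv]
              have hzsum : ∑ a : Fin d, f (child v hv a) = 0 := by
                by_cases hvu : v = u
                · subst hvu
                  have hchild : ∀ a : Fin d, f (child u hv a)
                      = ((if a = c0 then (1:ℂ) else 0)
                        - (if a = c1 then (1:ℂ) else 0)) * g 0 := by
                    intro a
                    have e0 : ((toWord u ++ [c0]) <+: toWord (child u hv a)) ↔ a = c0 := by
                      rw [Lchild c0 u hv a]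
                      constructor
                      · rintro (hp | ⟨_, h⟩)
                        · exact absurd hp (Lnotu c0)
                        · exact h
                      · intro e; exact Or.inr ⟨rfl, e⟩
                    have e1 : ((toWord u ++ [c1]) <+: toWord (child u hv a)) ↔ a = c1 := by
                      rw [Lchild c1 u hv a]
                      constructor
                      · rintro (hp | ⟨_, h⟩)
                        · exact absurd hp (Lnotu c1)
                        · exact h
                      · intro e; exact Or.inr ⟨rfl, e⟩
                    have hl : lvl (child u hv a) - (m+1) = 0 := by
                      rw [lvl_child, hlvlu]; omega
                    rw [hf]
                    simp only [hl, e0, e1]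
                  rw [Finset.sum_congr rfl fun a _ => hchild a]
                  simp only [sub_mul, ite_mul, one_mul, zero_mul]
                  rw [Finset.sum_sub_distrib,
                    Finset.sum_ite_eq' Finset.univ c0 (fun _ => g 0),
                    Finset.sum_ite_eq' Finset.univ c1 (fun _ => g 0),
                    if_pos (Finset.mem_univ _), if_pos (Finset.mem_univ _), sub_self]
                · have hchild : ∀ a : Fin d, f (child v hv a) = 0 := by
                    intro a
                    refine hfzero _ (fun hp => ?_) (fun hp => ?_)
                    · rcases (Lchild c0 v hv a).mp hp with hpre | ⟨he, _⟩
                      · exact hq0 hpre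
                      · exact hvu he
                    · rcases (Lchild c1 v hv a).mp hp with hpre | ⟨he, _⟩
                      · exact hq1 hpre
                      · exact hvu he
                  rw [Finset.sum_congr rfl fun a _ => hchild a, Finset.sum_const,
                    smul_zero]
              rw [hzsum]
              by_cases h0 : 0 < lvl v
              · rw [dif_pos h0, hpar0 h0]; ring
              · rw [dif_neg h0]; ring
            · rw [dif_neg hv]
              by_cases h0 : 0 < lvl v
              · rw [dif_pos h0, hpar0 h0]; ring
              · rw [dif_neg h0]; ring
      · -- f ≠ 0
        intro hf0
        have hval := congrFun hf0 (child u huh c0)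
        have e0 : (toWord u ++ [c0]) <+: toWord (child u huh c0) :=
          (Lchild c0 u huh c0).mpr (Or.inr ⟨rfl, rfl⟩)
        have e1 : ¬ (toWord u ++ [c1]) <+: toWord (child u huh c0) := by
          intro hp
          exact hboth _ e0 hp
        have hl : lvl (child u huh c0) - (m+1) = 0 := by
          rw [lvl_child, hlvlu]; omega
        rw [hf] at hval
        simp only [hl, e0, e1, if_true, if_false, Pi.zero_apply] at hval
        rw [hg] at hval
        simp only [pow_zero, mul_one] at hval
        exact hdx2 (by linear_combination hval)

  · -- stability of first equation
    intro hs
    rw [hy]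
    have hz : ∀ n : ℕ, (x * (d:ℂ)) ^ n * (1 / (x * (d:ℂ))) ^ n = 1 := by
      intro n; rw [← mul_pow, mul_one_div_cancel hxd0, one_pow]
    apply mul_left_cancel₀ (pow_ne_zero (2*h+2) hxd0)
    linear_combination (d:ℂ)^(h+1) * hz (2*h+2) - (d:ℂ)^(h+1) * hs
  · -- stability of second equation
    intro k hk hs
    rw [hy]
    have hz : ∀ n : ℕ, (x * (d:ℂ)) ^ n * (1 / (x * (d:ℂ))) ^ n = 1 := by
      intro n; rw [← mul_pow, mul_one_div_cancel hxd0, one_pow]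
    apply mul_left_cancel₀ (pow_ne_zero (2*k+4) hxd0)
    linear_combination (d:ℂ)^(k+2) * hz (2*k+4) - (d:ℂ)^(k+2) * (x * (d:ℂ)) * hz (2*k+3)
      + (d:ℂ) * (x * (d:ℂ))^(2*k+3) * hz 1 - (d:ℂ)^(k+2) * hs
  · -- same lambda
    rw [hy]
    rw [one_div_mul_eq_div, one_div_div, mul_div_cancel_right₀ x hd0]
    ring
end

section
/- Let x ∈ ℂ satisfy x ≠ ±1/√d and d^{h+1}x^{2h+2} = 1, and set λ = (d/(d+1))·(x + 1/(xd)). Then the vector f : V(T_h) → ℂ defined by f(v) = ((dx² − x)/(dx² − 1))·x^{ℓ(v)} + ((x − 1)/(dx² − 1))·1/(d^{ℓ(v)} x^{ℓ(v)}) is a nonzero vector satisfying Q_h f = λ f; in particular f is an eigenvector of Q_h with eigenvalue λ. -/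
open Matrix

/-- The completely symmetric candidate eigenvector: its value at a vertex depends only
on the level `i = lvl v` and is given by
`((dx² − x)/(dx² − 1))·xⁱ + ((x − 1)/(dx² − 1))·(dⁱxⁱ)⁻¹`. -/
noncomputable def fsym (d h : ℕ) (x : ℂ) : Vtx d h → ℂ := fun v =>
  ((d * x ^ 2 - x) / (d * x ^ 2 - 1)) * x ^ lvl v
    + ((x - 1) / (d * x ^ 2 - 1)) * (1 / ((d : ℂ) ^ lvl v * x ^ lvl v))

/-! ### Auxiliary material -/

namespace Stmt3Aux

open scoped Classical

variable {d h : ℕ}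

lemma toWord_length (v : Vtx d h) : (toWord v).length = v.1.val := by
  simp [toWord]

lemma toWord_injective : Function.Injective (toWord (d := d) (h := h)) := by
  rintro ⟨l, f⟩ ⟨m, g⟩ hw
  have hlm : l = m := by
    have := congrArg List.length hw
    simp [toWord] at this
    exact Fin.ext this
  subst hlm
  have : f = g := List.ofFn_injective hw
  rw [this]

def parentV (v : Vtx d h) : Vtx d h :=
  ⟨⟨v.1.val - 1, by have := v.1.isLt; omega⟩,
   fun i => v.2 ⟨i.val, lt_of_lt_of_le i.isLt (Nat.sub_le _ _)⟩⟩

def childV (v : Vtx d h) (hv : v.1.val < h) (a : Fin d) : Vtx d h :=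
  ⟨⟨v.1.val + 1, by omega⟩, Fin.snoc v.2 a⟩

@[simp] lemma lvl_parentV (v : Vtx d h) : lvl (parentV v) = v.1.val - 1 := rfl
@[simp] lemma lvl_childV (v : Vtx d h) (hv : v.1.val < h) (a : Fin d) :
    lvl (childV v hv a) = v.1.val + 1 := rfl
@[simp] lemma fst_parentV (v : Vtx d h) : (parentV v).1.val = v.1.val - 1 := rfl
@[simp] lemma fst_childV (v : Vtx d h) (hv : v.1.val < h) (a : Fin d) :
    (childV v hv a).1.val = v.1.val + 1 := rfl

lemma toWord_childV (v : Vtx d h) (hv : v.1.val < h) (a : Fin d) :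
    toWord (childV v hv a) = toWord v ++ [a] := by
  simp only [toWord, childV, List.ofFn_succ']
  simp [Fin.snoc_castSucc, List.concat_eq_append]

lemma toWord_parentV (v : Vtx d h) (hp : 0 < v.1.val) :
    toWord v = toWord (parentV v)
      ++ [v.2 ⟨v.1.val - 1, Nat.sub_lt hp one_pos⟩] := by
  obtain ⟨⟨l, hl⟩, f⟩ := v
  cases l with
  | zero => simp at hp
  | succ m =>
    simp only [toWord, parentV]
    rw [List.ofFn_succ' f]
    simp only [List.concat_eq_append]
    rfl

lemma not_adj_self (v : Vtx d h) : ¬ adj v v := by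
  rintro (⟨a, ha⟩ | ⟨a, ha⟩) <;>
    · have := congrArg List.length ha
      simp at this

lemma adj_iff (v w : Vtx d h) :
    adj v w ↔ (∃ (hv : v.1.val < h) (a : Fin d), w = childV v hv a)
      ∨ (0 < v.1.val ∧ w = parentV v) := by
  constructor
  · rintro (⟨a, ha⟩ | ⟨a, ha⟩)
    · left
      have hlen := congrArg List.length ha
      simp [toWord] at hlen
      have hv : v.1.val < h := by have := w.1.isLt; omega
      refine ⟨hv, a, toWord_injective ?_⟩
      rw [ha, toWord_childV]
    · right
      have hlen := congrArg List.length ha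
      simp [toWord] at hlen
      have hp : 0 < v.1.val := by omega
      refine ⟨hp, toWord_injective ?_⟩
      have h2 := toWord_parentV v hp
      rw [ha] at h2
      have := List.append_inj' h2 rfl
      exact this.1
  · rintro (⟨hv, a, rfl⟩ | ⟨hp, rfl⟩)
    · exact Or.inl ⟨a, toWord_childV v hv a⟩
    · exact Or.inr ⟨_, toWord_parentV v hp⟩

lemma childV_inj (v : Vtx d h) (hv : v.1.val < h) : Function.Injective (childV v hv) := by
  intro a b hab
  have := congrArg toWord hab
  rw [toWord_childV, toWord_childV] at this
  simpa using this

lemma sum_adj (v : Vtx d h) (g : Vtx d h → ℂ) :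
    ∑ w : Vtx d h, (if adj v w then g w else 0)
      = (if 0 < v.1.val then g (parentV v) else 0)
        + (if hv : v.1.val < h then ∑ a : Fin d, g (childV v hv a) else 0) := by
  classical
  have hpt : ∀ w : Vtx d h, (if adj v w then g w else 0)
      = (if 0 < v.1.val ∧ w = parentV v then g w else 0)
      + (if (∃ hv : v.1.val < h, ∃ a : Fin d, w = childV v hv a) then g w else 0) := by
    intro w
    by_cases h1 : adj v w
    · rcases (adj_iff v w).mp h1 with hc | hp
      · have hnp : ¬ (0 < v.1.val ∧ w = parentV v) := by
          rintro ⟨hp0, rfl⟩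
          obtain ⟨hv, a, hw⟩ := hc
          have := congrArg (fun u : Vtx d h => u.1.val) hw
          simp only [fst_parentV, fst_childV] at this
          omega
        rw [if_neg hnp]; simp [h1, hc]
      · obtain ⟨hp0, rfl⟩ := hp
        have hnc : ¬ (∃ hv : v.1.val < h, ∃ a : Fin d, parentV v = childV v hv a) := by
          rintro ⟨hv, a, hw⟩
          have := congrArg (fun u : Vtx d h => u.1.val) hw
          simp only [fst_parentV, fst_childV] at this
          omega
        simp [h1, hnc, hp0]
    · have h2 : ¬ (0 < v.1.val ∧ w = parentV v) := by
        rintro ⟨hp, rfl⟩; exact h1 ((adj_iff v _).mpr (Or.inr ⟨hp, rfl⟩))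
      have h3 : ¬ (∃ hv : v.1.val < h, ∃ a : Fin d, w = childV v hv a) := by
        rintro ⟨hv, a, rfl⟩; exact h1 ((adj_iff v _).mpr (Or.inl ⟨hv, a, rfl⟩))
      rw [if_neg h2, if_neg h3]; simp [h1]
  rw [Finset.sum_congr rfl fun w _ => hpt w, Finset.sum_add_distrib]
  congr 1
  · by_cases hp : 0 < v.1.val
    · simp only [hp, true_and, if_pos]
      rw [Finset.sum_ite_eq' Finset.univ (parentV v) g]
      simp
    · simp [hp]
  · by_cases hv : v.1.val < h
    · simp only [hv, exists_true_left, dif_pos]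
      rw [← Finset.sum_filter]
      have himg : Finset.univ.filter (fun w => ∃ a : Fin d, w = childV v hv a)
          = Finset.image (childV v hv) Finset.univ := by
        ext w
        simp [eq_comm]
      rw [himg, Finset.sum_image (fun a _ b _ hab => childV_inj v hv hab)]
    · simp [hv]

lemma Q_eq (v w : Vtx d h) :
    Q d h v w = (if adj v w then 1 / ((d:ℂ) + 1) else 0)
      + (if w = v then
          (if v.1.val = 0 then 1 / ((d:ℂ) + 1)
           else if v.1.val = h then (d:ℂ) / ((d:ℂ) + 1) else 0)
         else 0) := by
  by_cases h1 : adj v w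
  · have hne : w ≠ v := by rintro rfl; exact not_adj_self _ h1
    simp [Q, h1, hne]
  · by_cases h2 : w = v
    · subst h2
      by_cases h3 : w.1.val = 0 <;> by_cases h4 : w.1.val = h <;>
        simp [Q, h1, h3, h4, lvl]
    · have hne : v ≠ w := fun e => h2 e.symm
      simp [Q, h1, h2, hne]

/-- The value of `fsym` at a vertex as a function of its level. -/
noncomputable def Fc (d : ℕ) (x : ℂ) (i : ℕ) : ℂ :=
  ((d * x ^ 2 - x) / (d * x ^ 2 - 1)) * x ^ i
    + ((x - 1) / (d * x ^ 2 - 1)) * (1 / ((d : ℂ) ^ i * x ^ i))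

lemma fsym_eq (x : ℂ) (w : Vtx d h) : fsym d h x w = Fc d x (lvl w) := rfl

lemma mulVec_eval (x : ℂ) (v : Vtx d h) :
    (Q d h).mulVec (fsym d h x) v
      = (if 0 < v.1.val then (1 / ((d:ℂ) + 1)) * Fc d x (v.1.val - 1) else 0)
        + (if v.1.val < h then (d : ℂ) * ((1 / ((d:ℂ) + 1)) * Fc d x (v.1.val + 1)) else 0)
        + (if v.1.val = 0 then 1 / ((d:ℂ) + 1)
           else if v.1.val = h then (d:ℂ) / ((d:ℂ) + 1) else 0) * Fc d x v.1.val := by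
  classical
  simp only [Matrix.mulVec, dotProduct]
  have : ∀ w : Vtx d h, Q d h v w * fsym d h x w
      = (if adj v w then (1 / ((d:ℂ) + 1)) * fsym d h x w else 0)
        + (if w = v then
            (if v.1.val = 0 then 1 / ((d:ℂ) + 1)
             else if v.1.val = h then (d:ℂ) / ((d:ℂ) + 1) else 0) * fsym d h x w
           else 0) := by
    intro w
    rw [Q_eq, add_mul]
    congr 1 <;> simp [ite_mul]
  rw [Finset.sum_congr rfl fun w _ => this w, Finset.sum_add_distrib]
  rw [sum_adj v (fun w => (1 / ((d:ℂ) + 1)) * fsym d h x w)]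
  rw [Finset.sum_ite_eq' Finset.univ v
    (fun w => (if v.1.val = 0 then 1 / ((d:ℂ) + 1)
      else if v.1.val = h then (d:ℂ) / ((d:ℂ) + 1) else 0) * fsym d h x w)]
  simp only [Finset.mem_univ, if_pos, fsym_eq, lvl_parentV, lvl_childV, lvl]
  congr 1
  congr 1
  by_cases hv : v.1.val < h
  · rw [dif_pos hv, if_pos hv]
    simp [Finset.sum_const, mul_comm]
  · rw [dif_neg hv, if_neg hv]

variable {x : ℂ}

lemma gpos (hx0 : x ≠ 0) (hd0 : (d:ℂ) ≠ 0) (k : ℕ) :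
    x ^ k + d * x ^ (k + 2) = (d * (x + 1 / (x * d))) * x ^ (k + 1) := by
  field_simp
  ring

lemma gneg (hx0 : x ≠ 0) (hd0 : (d:ℂ) ≠ 0) (k : ℕ) :
    1 / ((d:ℂ) ^ k * x ^ k) + d * (1 / ((d:ℂ) ^ (k + 2) * x ^ (k + 2)))
      = (d * (x + 1 / (x * d))) * (1 / ((d:ℂ) ^ (k + 1) * x ^ (k + 1))) := by
  have hdk : (d:ℂ) ^ k ≠ 0 := pow_ne_zero _ hd0
  have hxk : x ^ k ≠ 0 := pow_ne_zero _ hx0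
  field_simp
  ring

lemma id_internal (hd0 : (d:ℂ) ≠ 0) (hx0 : x ≠ 0) (k : ℕ) :
    Fc d x k + d * Fc d x (k + 2)
      = (d * (x + 1 / (x * d))) * Fc d x (k + 1) := by
  unfold Fc
  linear_combination ((d * x ^ 2 - x) / (d * x ^ 2 - 1)) * gpos hx0 hd0 k
    + ((x - 1) / (d * x ^ 2 - 1)) * gneg hx0 hd0 k

lemma id_root (hd0 : (d:ℂ) ≠ 0) (hx0 : x ≠ 0) (hD : (d:ℂ) * x ^ 2 - 1 ≠ 0) :
    Fc d x 0 + d * Fc d x 1 = (d * (x + 1 / (x * d))) * Fc d x 0 := by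
  unfold Fc
  field_simp
  ring

lemma id_leaf (hd0 : (d:ℂ) ≠ 0) (hx0 : x ≠ 0) (hD : (d:ℂ) * x ^ 2 - 1 ≠ 0) (k : ℕ)
    (hs : (d : ℂ) ^ (k + 2) * x ^ (2 * k + 4) = 1) :
    Fc d x k + d * Fc d x (k + 1) = (d * (x + 1 / (x * d))) * Fc d x (k + 1) := by
  have hdk : (d:ℂ) ^ k ≠ 0 := pow_ne_zero _ hd0
  have hxk : x ^ k ≠ 0 := pow_ne_zero _ hx0
  have e1 : (1:ℂ) / ((d:ℂ) ^ k * x ^ k) = d ^ 2 * x ^ (k + 4) := by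
    rw [div_eq_iff (mul_ne_zero hdk hxk)]
    linear_combination -hs
  have e2 : (1:ℂ) / ((d:ℂ) ^ (k+1) * x ^ (k+1)) = d * x ^ (k + 3) := by
    rw [div_eq_iff (mul_ne_zero (pow_ne_zero _ hd0) (pow_ne_zero _ hx0))]
    linear_combination -hs
  unfold Fc
  rw [e1, e2]
  field_simp
  ring

end Stmt3Aux

open Stmt3Aux

/-- For x ≠ ±1/√d with dʰ⁺¹x²ʰ⁺² = 1, the vector `fsym d h x` is a nonzero vector with
`Q f = λ f` where λ = (d/(d+1))(x + 1/(xd)); i.e. it is an eigenvector of `Q d h`. -/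
theorem stmt_3 (d h : ℕ) (hd : 2 ≤ d) (hh : 1 ≤ h) (x : ℂ)
    (hx1 : x ≠ ((Real.sqrt d : ℝ) : ℂ)⁻¹) (hx2 : x ≠ -((Real.sqrt d : ℝ) : ℂ)⁻¹)
    (hsol : (d : ℂ) ^ (h + 1) * x ^ (2 * h + 2) = 1) :
    fsym d h x ≠ 0 ∧
    (Q d h).mulVec (fsym d h x)
      = (((d : ℂ) / (d + 1)) * (x + 1 / (x * d))) • fsym d h x := by
  have hd0 : (d:ℂ) ≠ 0 := Nat.cast_ne_zero.mpr (by omega)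
  have hd1 : (d:ℂ) + 1 ≠ 0 := by
    have : ((d + 1 : ℕ) : ℂ) ≠ 0 := Nat.cast_ne_zero.mpr (by omega)
    push_cast at this
    exact this
  have hx0 : x ≠ 0 := by
    rintro rfl
    rw [zero_pow (by omega : 2 * h + 2 ≠ 0), mul_zero] at hsol
    exact one_ne_zero hsol.symm
  have hc : ((Real.sqrt d : ℝ) : ℂ) ^ 2 = (d : ℂ) := by
    rw [← Complex.ofReal_pow, Real.sq_sqrt (by positivity : (0:ℝ) ≤ (d:ℝ))]
    norm_cast
  have hD : (d:ℂ) * x ^ 2 - 1 ≠ 0 := by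
    intro hcon
    have hc0 : ((Real.sqrt d : ℝ) : ℂ) ≠ 0 := by
      intro e
      rw [e] at hc
      simp at hc
      exact hd0 hc.symm
    have hfac : (x - (((Real.sqrt d : ℝ) : ℂ))⁻¹) * (x + (((Real.sqrt d : ℝ) : ℂ))⁻¹) = 0 := by
      have hr : (x - (((Real.sqrt d : ℝ) : ℂ))⁻¹) * (x + (((Real.sqrt d : ℝ) : ℂ))⁻¹)
          = x ^ 2 - ((((Real.sqrt d : ℝ) : ℂ)) ^ 2)⁻¹ := by ring
      rw [hr, hc]
      have : x ^ 2 = ((d:ℂ))⁻¹ := by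
        field_simp
        linear_combination hcon
      rw [this, sub_self]
    rcases mul_eq_zero.mp hfac with e | e
    · exact hx1 (sub_eq_zero.mp e)
    · exact hx2 (eq_neg_of_add_eq_zero_left e)
  obtain ⟨k, rfl⟩ : ∃ k, h = k + 1 := ⟨h - 1, by omega⟩
  constructor
  · intro h0
    have h1 := congrFun h0 (⟨0, Fin.elim0⟩ : Vtx d (k + 1))
    simp only [fsym, lvl, Fin.val_zero, pow_zero, mul_one, one_mul, Pi.zero_apply] at h1
    apply hD
    field_simp at h1
    linear_combination h1
  · funext v
    rw [mulVec_eval]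
    have hsmul : ((((d : ℂ) / (d + 1)) * (x + 1 / (x * d))) • fsym d (k+1) x) v
        = (1 / ((d:ℂ) + 1)) * ((d * (x + 1 / (x * d))) * Fc d x v.1.val) := by
      simp only [Pi.smul_apply, smul_eq_mul, fsym_eq, lvl]
      ring
    rw [hsmul]
    by_cases hl0 : v.1.val = 0
    · rw [hl0]
      have hlh : (0:ℕ) < k + 1 := by omega
      simp only [lt_irrefl, if_false, if_pos hlh, if_pos rfl]
      norm_num
      linear_combination (1 / ((d:ℂ) + 1)) * id_root hd0 hx0 hD
    · obtain ⟨m, hm⟩ : ∃ m, v.1.val = m + 1 := ⟨v.1.val - 1, by omega⟩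
      by_cases hlh : v.1.val = k + 1
      · rw [hlh]
        have h1 : (0:ℕ) < k + 1 := by omega
        have h2 : ¬ (k + 1 < k + 1) := by omega
        simp only [if_pos h1, if_neg h2, if_neg (by omega : ¬ k + 1 = 0), if_pos rfl,
          eq_self_iff_true, if_true, Nat.add_sub_cancel, add_zero]
        have hs : (d : ℂ) ^ (k + 2) * x ^ (2 * k + 4) = 1 := by
          have e1 : k + 1 + 1 = k + 2 := by omega
          have e2 : 2 * (k + 1) + 2 = 2 * k + 4 := by omega
          rw [e1, e2] at hsol
          exact hsol
        linear_combination (1 / ((d:ℂ) + 1)) * id_leaf hd0 hx0 hD k hs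
      · have h1 : 0 < v.1.val := by omega
        have h2 : v.1.val < k + 1 := by have := v.1.isLt; omega
        rw [hm]
        simp only [if_pos (by omega : 0 < m + 1), if_pos (by omega : m + 1 < k + 1),
          if_neg (by omega : ¬ m + 1 = 0), if_neg (by omega : ¬ m + 1 = k + 1),
          Nat.add_sub_cancel, zero_mul, add_zero]
        have : m + 1 + 1 = m + 2 := by omega
        rw [this]
        linear_combination (1 / ((d:ℂ) + 1)) * id_internal hd0 hx0 m
end

section
/- Let 0 ≤ k ≤ h−1 and let x ∈ ℂ satisfy x ≠ ±1/√d and d^{k+2}x^{2k+4} − d^{k+2}x^{2k+3} + dx − 1 = 0, and set λ = (d/(d+1))·(x + 1/(xd)). Let v be a vertex of T_h with ℓ(v) = h−1−k and let j ∈ {1,…,d−1}. Then the vector f_{v,j,j+1} : V(T_h) → ℂ defined by f_{v,j,j+1}(w) = d x^{i+2}/(dx² − 1) − 1/((dx² − 1) d^{i} x^{i}) for w ∈ T_j^v, f_{v,j,j+1}(w) = −d x^{i+2}/(dx² − 1) + 1/((dx² − 1) d^{i} x^{i}) for w ∈ T_{j+1}^v (in both cases i = ℓ(w) − h + k), and f_{v,j,j+1}(w)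 = 0 otherwise, is a nonzero vector satisfying Q_h f_{v,j,j+1} = λ f_{v,j,j+1}. -/
open Matrix

/-- Value at depth `i` (below the relevant children of `v`) of the pseudo
anti-symmetric eigenvector: `d·x^{i+2}/(dx²−1) − 1/((dx²−1)·dⁱ·xⁱ)`. -/
noncomputable def yanti (d : ℕ) (x : ℂ) (i : ℕ) : ℂ :=
  (d : ℂ) * x ^ (i + 2) / (d * x ^ 2 - 1) - 1 / ((d * x ^ 2 - 1) * (d : ℂ) ^ i * x ^ i)

-- The pseudo anti-symmetric candidate eigenvector supported on the subtrees rooted at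
-- the children `c1` and `c2` of `v`, taking value `yanti d x i` with
-- `i = lvl w + k - h` on the first subtree and its negative on the second.
open scoped Classical in
noncomputable def fantiX (d h k : ℕ) (x : ℂ) (v : Vtx d h) (c1 c2 : Fin d) :
    Vtx d h → ℂ := fun w =>
  if inSub v c1 w then yanti d x (lvl w + k - h)
  else if inSub v c2 w then -yanti d x (lvl w + k - h)
  else 0

section Tree
variable {d h : ℕ}

lemma toWord_length (v : Vtx d h) : (toWord v).length = lvl v := by
  simp [toWord, lvl]

lemma lvl_le (v : Vtx d h) : lvl v ≤ h := by
  have := v.1.2; simp [lvl]; omega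

lemma toWord_injective : Function.Injective (toWord (d := d) (h := h)) := by
  rintro ⟨⟨l1, hl1⟩, f1⟩ ⟨⟨l2, hl2⟩, f2⟩ hw
  have hlen : l1 = l2 := by
    have := congrArg List.length hw
    simpa [toWord] using this
  subst hlen
  simp only [toWord] at hw
  have := List.ofFn_injective hw
  simp_all

/-- Build a vertex from a word (junk if too long). -/
def ofW (l : List (Fin d)) : Vtx d h :=
  if hl : l.length ≤ h then ⟨⟨l.length, by omega⟩, fun i => l.get ⟨i.1, i.2⟩⟩
  else ⟨⟨0, by omega⟩, Fin.elim0⟩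

lemma toWord_ofW {l : List (Fin d)} (hl : l.length ≤ h) :
    toWord (ofW l : Vtx d h) = l := by
  rw [ofW, dif_pos hl]
  exact List.ofFn_get l

def parentV (w : Vtx d h) : Vtx d h := ofW (toWord w).dropLast

def childV (w : Vtx d h) (a : Fin d) : Vtx d h := ofW (toWord w ++ [a])

lemma toWord_parentV (w : Vtx d h) : toWord (parentV w) = (toWord w).dropLast := by
  apply toWord_ofW
  rw [List.length_dropLast, toWord_length]
  have := lvl_le w; omega

lemma lvl_parentV (w : Vtx d h) : lvl (parentV w) = lvl w - 1 := by
  rw [← toWord_length, toWord_parentV, List.length_dropLast, toWord_length]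

lemma toWord_childV {w : Vtx d h} (hw : lvl w < h) (a : Fin d) :
    toWord (childV w a) = toWord w ++ [a] := by
  apply toWord_ofW
  rw [List.length_append, toWord_length]
  simpa using hw

lemma lvl_childV {w : Vtx d h} (hw : lvl w < h) (a : Fin d) :
    lvl (childV w a) = lvl w + 1 := by
  rw [← toWord_length, toWord_childV hw, List.length_append, toWord_length]; simp

lemma adj_iff (w w' : Vtx d h) :
    adj w w' ↔ (1 ≤ lvl w ∧ w' = parentV w) ∨ (lvl w < h ∧ ∃ a, w' = childV w a) := by
  constructor
  · rintro (⟨a, ha⟩ | ⟨a, ha⟩)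
    · right
      have hlen : lvl w < h := by
        have := toWord_length w'
        have := toWord_length w
        have := lvl_le w'
        have hl := congrArg List.length ha
        simp at hl; omega
      refine ⟨hlen, a, toWord_injective ?_⟩
      rw [toWord_childV hlen, ha]
    · left
      have h1 : 1 ≤ lvl w := by
        have := toWord_length w
        have hl := congrArg List.length ha
        simp at hl; omega
      refine ⟨h1, toWord_injective ?_⟩
      rw [toWord_parentV, ha]
      simp
  · rintro (⟨h1, rfl⟩ | ⟨h1, a, rfl⟩)
    · right
      have hne : toWord w ≠ [] := by
        intro hc
        have := toWord_length w
        rw [hc] at this; simp at this; omega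
      refine ⟨(toWord w).getLast hne, ?_⟩
      rw [toWord_parentV, List.dropLast_append_getLast hne]
    · left
      exact ⟨a, toWord_childV h1 a⟩

end Tree

section MulVec
variable {d h : ℕ}

lemma childV_inj {w : Vtx d h} (hw : lvl w < h) {a b : Fin d}
    (hab : childV w a = childV w b) : a = b := by
  have := congrArg toWord hab
  rw [toWord_childV hw, toWord_childV hw] at this
  simpa using this

lemma ne_parentV {w : Vtx d h} (hl : 1 ≤ lvl w) : w ≠ parentV w := by
  intro hc
  have := lvl_parentV w
  rw [← hc] at this; omega

lemma ne_childV {w : Vtx d h} (hl : lvl w < h) (a : Fin d) : w ≠ childV w a := by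
  intro hc
  have := lvl_childV hl a
  rw [← hc] at this; omega

lemma parentV_ne_childV {w : Vtx d h} (h1 : 1 ≤ lvl w) (hl : lvl w < h) (a : Fin d) :
    parentV w ≠ childV w a := by
  intro hc
  have h2 := lvl_parentV w
  have h3 := lvl_childV hl a
  rw [hc] at h2; omega

open scoped Classical in
lemma Q_eq (hh : 1 ≤ h) (w w' : Vtx d h) :
    Q d h w w'
      = (if 1 ≤ lvl w ∧ w' = parentV w then (1/((d:ℂ)+1)) else 0)
      + (if lvl w < h ∧ ∃ a, w' = childV w a then (1/((d:ℂ)+1)) else 0)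
      + (if w = w' ∧ lvl w = 0 then (1/((d:ℂ)+1)) else 0)
      + (if w = w' ∧ lvl w = h then ((d:ℂ)/((d:ℂ)+1)) else 0) := by
  rw [Q]
  by_cases ha : adj w w'
  · rw [if_pos ha]
    rcases (adj_iff w w').1 ha with ⟨h1, rfl⟩ | ⟨h1, a, rfl⟩
    · rw [if_pos ⟨h1, rfl⟩, if_neg, if_neg, if_neg]
      · ring
      · rintro ⟨he, h2⟩; exact ne_parentV h1 he
      · rintro ⟨he, h2⟩; exact ne_parentV h1 he
      · rintro ⟨h2, a, hc⟩
        exact parentV_ne_childV h1 h2 a hc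
    · rw [if_neg, if_pos ⟨h1, a, rfl⟩, if_neg, if_neg]
      · ring
      · rintro ⟨he, h2⟩; exact ne_childV h1 a he
      · rintro ⟨he, h2⟩; exact ne_childV h1 a he
      · rintro ⟨h2, hc⟩
        exact parentV_ne_childV h2 h1 a hc.symm
  · rw [if_neg ha]
    have hnp : ¬ (1 ≤ lvl w ∧ w' = parentV w) := by
      rintro ⟨h1, rfl⟩; exact ha ((adj_iff w _).2 (Or.inl ⟨h1, rfl⟩))
    have hnc : ¬ (lvl w < h ∧ ∃ a, w' = childV w a) := by
      rintro ⟨h1, a, rfl⟩; exact ha ((adj_iff w _).2 (Or.inr ⟨h1, a, rfl⟩))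
    rw [if_neg hnp, if_neg hnc]
    by_cases h0 : w = w' ∧ lvl w = 0
    · have hn1 : ¬ (w = w' ∧ lvl w = h) := by
        rintro ⟨he, hc⟩
        exact absurd h0.2 (by omega)
      rw [if_pos h0, if_neg hn1, if_pos h0]
      ring
    · rw [if_neg h0]
      by_cases h1 : w = w' ∧ lvl w = h
      · rw [if_pos h1, if_neg h0]; ring
      · rw [if_neg h1, if_neg h0]; ring

end MulVec

section MulVec2
variable {d h : ℕ}

open scoped Classical in
lemma mulVec_Q (hh : 1 ≤ h) (f : Vtx d h → ℂ) (w : Vtx d h) :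
    (Q d h).mulVec f w
      = (1/((d:ℂ)+1)) * ((if 1 ≤ lvl w then f (parentV w) else 0)
        + (if lvl w < h then ∑ a : Fin d, f (childV w a) else 0)
        + (if lvl w = 0 then f w else 0)
        + (if lvl w = h then (d:ℂ) * f w else 0)) := by
  have hexp : ∀ w', Q d h w w' * f w'
      = (if 1 ≤ lvl w ∧ w' = parentV w then (1/((d:ℂ)+1)) * f w' else 0)
      + (if lvl w < h ∧ ∃ a, w' = childV w a then (1/((d:ℂ)+1)) * f w' else 0)
      + (if w = w' ∧ lvl w = 0 then (1/((d:ℂ)+1)) * f w' else 0)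
      + (if w = w' ∧ lvl w = h then ((d:ℂ)/((d:ℂ)+1)) * f w' else 0) := by
    intro w'
    rw [Q_eq hh w w', add_mul, add_mul, add_mul]
    congr 1 <;> [congr 1; skip]
    · congr 1 <;> split_ifs <;> simp
    · split_ifs <;> simp
    · split_ifs <;> simp
  show ∑ w', Q d h w w' * f w' = _
  simp only [hexp]
  rw [Finset.sum_add_distrib, Finset.sum_add_distrib, Finset.sum_add_distrib]
  have s1 : ∑ w', (if 1 ≤ lvl w ∧ w' = parentV w then (1/((d:ℂ)+1)) * f w' else 0)
      = if 1 ≤ lvl w then (1/((d:ℂ)+1)) * f (parentV w) else 0 := by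
    by_cases hl : 1 ≤ lvl w
    · simp only [hl, true_and]
      rw [Finset.sum_ite_eq' Finset.univ (parentV w) (fun w' => (1/((d:ℂ)+1)) * f w')]
      simp
    · simp [hl]
  have s2 : ∑ w', (if lvl w < h ∧ ∃ a, w' = childV w a then (1/((d:ℂ)+1)) * f w' else 0)
      = if lvl w < h then ∑ a : Fin d, (1/((d:ℂ)+1)) * f (childV w a) else 0 := by
    by_cases hl : lvl w < h
    · simp only [hl, true_and]
      rw [show ∀ g : Vtx d h → ℂ, ∑ w', (if (∃ a, w' = childV w a) then g w' else 0)
          = ∑ w' ∈ Finset.image (childV w) Finset.univ, g w' from ?_]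
      · rw [Finset.sum_image (fun a _ b _ hab => childV_inj hl hab)]
        simp
      · intro g
        rw [← Finset.sum_filter]
        congr 1
        ext w'
        simp [eq_comm]
    · simp [hl]
  have s3 : ∑ w', (if w = w' ∧ lvl w = 0 then (1/((d:ℂ)+1)) * f w' else 0)
      = if lvl w = 0 then (1/((d:ℂ)+1)) * f w else 0 := by
    by_cases hl : lvl w = 0
    · simp only [hl, and_true]
      rw [Finset.sum_ite_eq Finset.univ w (fun w' => (1/((d:ℂ)+1)) * f w')]
      simp
    · simp [hl]
  have s4 : ∑ w', (if w = w' ∧ lvl w = h then ((d:ℂ)/((d:ℂ)+1)) * f w' else 0)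
      = if lvl w = h then ((d:ℂ)/((d:ℂ)+1)) * f w else 0 := by
    by_cases hl : lvl w = h
    · simp only [hl, and_true]
      rw [Finset.sum_ite_eq Finset.univ w (fun w' => ((d:ℂ)/((d:ℂ)+1)) * f w')]
      simp
    · simp [hl]
  rw [s1, s2, s3, s4]
  simp only [mul_add, mul_ite, mul_zero, Finset.mul_sum]
  split_ifs <;> ring

end MulVec2

section Sub
variable {d h : ℕ} {v w : Vtx d h} {c c1 c2 : Fin d} {a : Fin d}

lemma inSub_lvl (hs : inSub v c w) : lvl v + 1 ≤ lvl w := by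
  have := hs.length_le
  rw [List.length_append, toWord_length, toWord_length] at this
  simpa using this

lemma not_inSub_self (v : Vtx d h) (c : Fin d) : ¬ inSub v c v := by
  intro hs
  have := inSub_lvl hs
  omega

lemma inSub_label_eq (h1 : inSub v c1 w) (h2 : inSub v c2 w) : c1 = c2 := by
  have he : toWord v ++ [c1] = toWord v ++ [c2] :=
    (List.prefix_of_prefix_length_le h1 h2 (by simp)).eq_of_length (by simp)
  simpa using he

lemma inSub_childV (hw : lvl w < h) (hs : inSub v c w) (a : Fin d) :
    inSub v c (childV w a) := by
  rw [inSub, toWord_childV hw]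
  exact hs.trans (List.prefix_append _ _)

lemma inSub_childV_self (hv : lvl v < h) (c : Fin d) : inSub v c (childV v c) := by
  rw [inSub, toWord_childV hv]

lemma eq_of_inSub_childV (hw : lvl w < h) (hns : ¬ inSub v c w)
    (hs : inSub v c (childV w a)) : w = v ∧ a = c := by
  rw [inSub, toWord_childV hw] at hs
  have hlen : (toWord v ++ [c]).length = (toWord w ++ [a]).length := by
    rcases Nat.lt_or_ge (toWord v ++ [c]).length (toWord w ++ [a]).length with hlt | hge
    · exfalso
      apply hns
      have : (toWord v ++ [c]).length ≤ (toWord w).length := by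
        simp only [List.length_append, List.length_singleton] at hlt ⊢
        omega
      exact List.prefix_of_prefix_length_le hs (List.prefix_append _ _) this
    · exact le_antisymm hs.length_le hge
  have he := hs.eq_of_length hlen
  have := List.append_inj he (by simp at hlen; simpa using hlen)
  refine ⟨toWord_injective this.1.symm, by simpa using this.2.symm⟩

lemma inSub_of_parentV (hs : inSub v c (parentV w)) : inSub v c w := by
  rw [inSub, toWord_parentV] at hs
  exact hs.trans (List.dropLast_prefix _)

lemma inSub_parentV (hs : inSub v c w) (hlt : lvl v + 1 < lvl w) :
    inSub v c (parentV w) := by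
  rw [inSub, toWord_parentV]
  apply List.prefix_of_prefix_length_le hs (List.dropLast_prefix _)
  rw [List.length_append, List.length_dropLast, toWord_length, toWord_length]
  simp only [List.length_singleton]
  omega

lemma parentV_eq_of_inSub (hs : inSub v c w) (hl : lvl w = lvl v + 1) :
    parentV w = v := by
  have he : toWord v ++ [c] = toWord w := by
    apply hs.eq_of_length
    rw [List.length_append, toWord_length, toWord_length, hl]
    simp
  apply toWord_injective
  rw [toWord_parentV, ← he]
  simp

end Sub




section
variable {d : ℕ} {x : ℂ}

lemma yanti_eq (hd : (d:ℂ) ≠ 0) (hx : x ≠ 0) (hD : (d:ℂ) * x ^ 2 - 1 ≠ 0) (i : ℕ) :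
    yanti d x i = ((d:ℂ) * x ^ (i+2) * ((d:ℂ) ^ i * x ^ i) - 1)
      / (((d:ℂ) * x ^ 2 - 1) * ((d:ℂ) ^ i * x ^ i)) := by
  have hu : (d:ℂ) ^ i * x ^ i ≠ 0 := mul_ne_zero (pow_ne_zero _ hd) (pow_ne_zero _ hx)
  rw [yanti, mul_assoc, div_sub_div _ _ hD (mul_ne_zero hD hu),
    div_eq_div_iff (mul_ne_zero hD (mul_ne_zero hD hu)) (mul_ne_zero hD hu)]
  ring

lemma yanti_rec (hd : (d:ℂ) ≠ 0) (hx : x ≠ 0) (hD : (d:ℂ) * x ^ 2 - 1 ≠ 0) (i : ℕ) :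
    yanti d x i + d * yanti d x (i + 2) = ((d:ℂ) * x + 1 / x) * yanti d x (i + 1) := by
  have u0 : (d:ℂ) ^ i * x ^ i ≠ 0 := mul_ne_zero (pow_ne_zero _ hd) (pow_ne_zero _ hx)
  have u1 : (d:ℂ) ^ (i+1) * x ^ (i+1) ≠ 0 := mul_ne_zero (pow_ne_zero _ hd) (pow_ne_zero _ hx)
  have u2 : (d:ℂ) ^ (i+2) * x ^ (i+2) ≠ 0 := mul_ne_zero (pow_ne_zero _ hd) (pow_ne_zero _ hx)
  rw [yanti_eq hd hx hD i, yanti_eq hd hx hD (i+1), yanti_eq hd hx hD (i+2),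
    ← mul_div_assoc, ← mul_div_assoc,
    div_add_div _ _ (mul_ne_zero hD u0) (mul_ne_zero hD u2),
    div_eq_div_iff (mul_ne_zero (mul_ne_zero hD u0) (mul_ne_zero hD u2)) (mul_ne_zero hD u1)]
  have hxx : (1:ℂ) / x * x = 1 := one_div_mul_cancel hx
  field_simp
  ring

lemma yanti_zero (hd : (d:ℂ) ≠ 0) (hx : x ≠ 0) (hD : (d:ℂ) * x ^ 2 - 1 ≠ 0) :
    yanti d x 0 = 1 := by
  rw [yanti_eq hd hx hD 0]
  simp only [pow_zero, one_mul, mul_one]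
  exact div_self hD

lemma yanti_top (hd : (d:ℂ) ≠ 0) (hx : x ≠ 0) (hD : (d:ℂ) * x ^ 2 - 1 ≠ 0) :
    (d:ℂ) * yanti d x 1 = ((d:ℂ) * x + 1 / x) * yanti d x 0 := by
  rw [yanti_eq hd hx hD 1, yanti_zero hd hx hD, ← mul_div_assoc, mul_one,
    div_eq_iff (mul_ne_zero hD (mul_ne_zero (pow_ne_zero _ hd) (pow_ne_zero _ hx)))]
  field_simp
  ring

end

section
variable {d : ℕ} {x : ℂ}

lemma yanti_leaf (hd : (d:ℂ) ≠ 0) (hx : x ≠ 0) (hD : (d:ℂ) * x ^ 2 - 1 ≠ 0) (k' : ℕ)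
    (hs : (d:ℂ) ^ (k'+3) * x ^ (2*k'+6) - (d:ℂ) ^ (k'+3) * x ^ (2*k'+5) + d * x - 1 = 0) :
    yanti d x k' + d * yanti d x (k'+1) = ((d:ℂ) * x + 1 / x) * yanti d x (k'+1) := by
  have u0 : (d:ℂ) ^ k' * x ^ k' ≠ 0 := mul_ne_zero (pow_ne_zero _ hd) (pow_ne_zero _ hx)
  have u1 : (d:ℂ) ^ (k'+1) * x ^ (k'+1) ≠ 0 := mul_ne_zero (pow_ne_zero _ hd) (pow_ne_zero _ hx)
  have hμ : (d:ℂ) * x + 1 / x = ((d:ℂ) * x ^ 2 + 1) / x := by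
    field_simp
  rw [yanti_eq hd hx hD k', yanti_eq hd hx hD (k'+1), hμ,
    ← mul_div_assoc, div_mul_div_comm,
    div_add_div _ _ (mul_ne_zero hD u0) (mul_ne_zero hD u1),
    div_eq_div_iff (mul_ne_zero (mul_ne_zero hD u0) (mul_ne_zero hD u1))
      (mul_ne_zero hx (mul_ne_zero hD u1))]
  linear_combination (-(((d:ℂ) * x ^ 2 - 1) ^ 2 * ((d:ℂ) ^ k' * x ^ k')
    * ((d:ℂ) ^ (k'+1) * x ^ (k'+1)))) * hs

lemma yanti_leaf0 (hd : (d:ℂ) ≠ 0) (hx : x ≠ 0) (hD : (d:ℂ) * x ^ 2 - 1 ≠ 0)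
    (hs : (d:ℂ) ^ 2 * x ^ 4 - (d:ℂ) ^ 2 * x ^ 3 + d * x - 1 = 0) :
    (d:ℂ) * yanti d x 0 = ((d:ℂ) * x + 1 / x) * yanti d x 0 := by
  rw [yanti_zero hd hx hD, mul_one, mul_one]
  have hfac : ((d:ℂ) * x ^ 2 - 1) * ((d:ℂ) * x ^ 2 - d * x + 1) = 0 := by
    linear_combination hs
  rcases mul_eq_zero.1 hfac with h | h
  · exact absurd h hD
  · field_simp
    linear_combination -h

theorem main_aux (d h : ℕ) (hd : 2 ≤ d) (hh : 1 ≤ h) (k : ℕ) (hk : k ≤ h - 1) (x : ℂ)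
    (hx1 : x ≠ ((Real.sqrt d : ℝ) : ℂ)⁻¹) (hx2 : x ≠ -((Real.sqrt d : ℝ) : ℂ)⁻¹)
    (hsol : (d : ℂ) ^ (k + 2) * x ^ (2 * k + 4) - (d : ℂ) ^ (k + 2) * x ^ (2 * k + 3)
      + d * x - 1 = 0)
    (v : Vtx d h) (hv : lvl v = h - 1 - k) (c1 c2 : Fin d) (hne : c1 ≠ c2) :
    fantiX d h k x v c1 c2 ≠ 0 ∧
    (Q d h).mulVec (fantiX d h k x v c1 c2)
      = (((d : ℂ) / (d + 1)) * (x + 1 / (x * d)))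
          • fantiX d h k x v c1 c2 := by
  have hd0 : (d:ℂ) ≠ 0 := Nat.cast_ne_zero.mpr (by omega)
  have hd1 : ((d:ℂ) + 1) ≠ 0 := by
    have : ((d + 1 : ℕ) : ℂ) ≠ 0 := Nat.cast_ne_zero.mpr (by omega)
    push_cast at this
    exact this
  have hx0 : x ≠ 0 := by
    rintro rfl
    rw [zero_pow (by omega), zero_pow (by omega)] at hsol
    simp at hsol
  have hD : (d:ℂ) * x ^ 2 - 1 ≠ 0 := by
    intro hc
    have hs2 : (((Real.sqrt d : ℝ) : ℂ)) ^ 2 = (d:ℂ) := by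
      have : (Real.sqrt d) ^ 2 = (d:ℝ) := Real.sq_sqrt (by positivity)
      exact_mod_cast this
    have hsne : ((Real.sqrt d : ℝ) : ℂ) ≠ 0 := by
      intro h0
      rw [h0] at hs2
      simp at hs2
      exact hd0 hs2.symm
    have hfac : (x - ((Real.sqrt d : ℝ) : ℂ)⁻¹) * (x + ((Real.sqrt d : ℝ) : ℂ)⁻¹) = 0 := by
      have hinv : (((Real.sqrt d : ℝ) : ℂ)⁻¹) ^ 2 = ((d:ℂ))⁻¹ := by
        rw [inv_pow, hs2]
      have hxsq : x ^ 2 = ((d:ℂ))⁻¹ := by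
        field_simp
        linear_combination hc
      have : x ^ 2 - (((Real.sqrt d : ℝ) : ℂ)⁻¹) ^ 2 = 0 := by
        rw [hxsq, hinv]
        ring
      linear_combination this
    rcases mul_eq_zero.1 hfac with h1 | h1
    · exact hx1 (sub_eq_zero.mp h1)
    · exact hx2 (eq_neg_of_add_eq_zero_left h1)
  have hlam : ((d : ℂ) / (d + 1)) * (x + 1 / (x * d))
      = (1/((d:ℂ)+1)) * ((d:ℂ)*x + 1/x) := by
    field_simp
  have hkh : k < h := by omega
  have hlv : lvl v + 1 = h - k := by omega
  have hvh : lvl v < h := by omega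
  set F := fantiX d h k x v c1 c2 with hFdef
  have hF1 : ∀ u, inSub v c1 u → F u = yanti d x (lvl u + k - h) := by
    intro u hu
    simp only [hFdef, fantiX]
    rw [if_pos hu]
  have hF2 : ∀ u, inSub v c2 u → F u = -yanti d x (lvl u + k - h) := by
    intro u hu
    have hn1 : ¬ inSub v c1 u := fun hc => hne (inSub_label_eq hc hu)
    simp only [hFdef, fantiX]
    rw [if_neg hn1, if_pos hu]
  have hF0 : ∀ u, ¬ inSub v c1 u → ¬ inSub v c2 u → F u = 0 := by
    intro u h1 h2
    simp only [hFdef, fantiX]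
    rw [if_neg h1, if_neg h2]
  have hFv : F v = 0 := hF0 v (not_inSub_self v c1) (not_inSub_self v c2)
  constructor
  · -- nonzero
    have hlen : (toWord v ++ [c1]).length ≤ h := by
      rw [List.length_append, toWord_length]
      simp only [List.length_singleton]
      omega
    set w0 : Vtx d h := ofW (toWord v ++ [c1]) with hw0def
    have hw0 : inSub v c1 w0 := by
      rw [inSub, hw0def, toWord_ofW hlen]
    have hlw0 : lvl w0 = h - k := by
      rw [← toWord_length, hw0def, toWord_ofW hlen, List.length_append, toWord_length]
      simp only [List.length_singleton]
      omega
    intro hzero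
    have hval := hF1 w0 hw0
    rw [hzero] at hval
    simp only [Pi.zero_apply] at hval
    rw [hlw0, show h - k + k - h = 0 by omega, yanti_zero hd0 hx0 hD] at hval
    exact one_ne_zero hval.symm
  · -- eigenvector
    funext w
    rw [mulVec_Q hh, Pi.smul_apply, smul_eq_mul, hlam]
    have key : ∀ (ε : ℂ) (c : Fin d),
        (∀ u, inSub v c u → F u = ε * yanti d x (lvl u + k - h)) →
        inSub v c w →
        1 / ((d:ℂ) + 1) * ((if 1 ≤ lvl w then F (parentV w) else 0)
          + (if lvl w < h then ∑ a : Fin d, F (childV w a) else 0)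
          + (if lvl w = 0 then F w else 0)
          + (if lvl w = h then (d:ℂ) * F w else 0))
        = (1/((d:ℂ)+1) * ((d:ℂ)*x + 1/x)) * F w := by
      intro ε c hval hw
      have hlw : lvl v + 1 ≤ lvl w := inSub_lvl hw
      have hwle : lvl w ≤ h := lvl_le w
      rw [hval w hw]
      rw [if_pos (show 1 ≤ lvl w by omega), if_neg (show ¬ lvl w = 0 by omega)]
      by_cases hl : lvl w = h
      · -- leaf
        rw [if_neg (show ¬ lvl w < h by omega), if_pos hl]
        by_cases hk0 : k = 0
        · -- leaf at subroot
          have hpv : parentV w = v := parentV_eq_of_inSub hw (by omega)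
          rw [hpv, hFv, hl, show h + k - h = k by omega, hk0]
          have hs0 : (d:ℂ) ^ 2 * x ^ 4 - (d:ℂ) ^ 2 * x ^ 3 + d * x - 1 = 0 := by
            rw [hk0] at hsol
            linear_combination hsol
          have hl0 := yanti_leaf0 hd0 hx0 hD hs0
          linear_combination (ε / ((d:ℂ)+1)) * hl0
        · -- proper leaf
          have hpar : inSub v c (parentV w) := inSub_parentV hw (by omega)
          rw [hval _ hpar, lvl_parentV, hl,
            show h - 1 + k - h = k - 1 by omega, show h + k - h = k by omega]
          have hs' := hsol
          rw [show k + 2 = (k-1) + 3 by omega, show 2*k + 4 = 2*(k-1) + 6 by omega,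
            show 2*k + 3 = 2*(k-1) + 5 by omega] at hs'
          have hlf := yanti_leaf hd0 hx0 hD (k-1) hs'
          rw [show k - 1 + 1 = k by omega] at hlf
          linear_combination (ε / ((d:ℂ)+1)) * hlf
      · -- interior
        have hlth : lvl w < h := by omega
        rw [if_pos hlth, if_neg hl]
        have hch : ∀ a : Fin d, F (childV w a) = ε * yanti d x (lvl w + k - h + 1) := by
          intro a
          rw [hval _ (inSub_childV hlth hw a), lvl_childV hlth,
            show lvl w + 1 + k - h = lvl w + k - h + 1 by omega]
        rw [Finset.sum_congr rfl (fun a _ => hch a), Finset.sum_const, Finset.card_univ,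
          Fintype.card_fin, nsmul_eq_mul]
        by_cases hroot : lvl w = lvl v + 1
        · -- child of v
          have hpv : parentV w = v := parentV_eq_of_inSub hw hroot
          rw [hpv, hFv, show lvl w + k - h = 0 by omega]
          have htp := yanti_top hd0 hx0 hD
          linear_combination (ε / ((d:ℂ)+1)) * htp
        · -- deeper interior
          have hpar : inSub v c (parentV w) := inSub_parentV hw (by omega)
          rw [hval _ hpar, lvl_parentV,
            show lvl w - 1 + k - h = lvl w + k - h - 1 by omega]
          have hrec := yanti_rec hd0 hx0 hD (lvl w + k - h - 1)
          rw [show lvl w + k - h - 1 + 2 = lvl w + k - h + 1 by omega,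
            show lvl w + k - h - 1 + 1 = lvl w + k - h by omega] at hrec
          linear_combination (ε / ((d:ℂ)+1)) * hrec
    by_cases hs1 : inSub v c1 w
    · exact key 1 c1 (fun u hu => by rw [hF1 u hu, one_mul]) hs1
    · by_cases hs2 : inSub v c2 w
      · exact key (-1) c2 (fun u hu => by rw [hF2 u hu]; ring) hs2
      · by_cases hwv : w = v
        · subst hwv
          have hsum : ∑ a : Fin d, F (childV w a) = 0 := by
            have h1 : ∀ a : Fin d, F (childV w a)
                = (if a = c1 then yanti d x 0 else 0)
                  + (if a = c2 then -yanti d x 0 else 0) := by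
              intro a
              by_cases e1 : a = c1
              · subst e1
                rw [hF1 _ (inSub_childV_self hvh a), lvl_childV hvh,
                  show lvl w + 1 + k - h = 0 by omega, if_pos rfl, if_neg hne]
                ring
              · by_cases e2 : a = c2
                · subst e2
                  rw [hF2 _ (inSub_childV_self hvh a), lvl_childV hvh,
                    show lvl w + 1 + k - h = 0 by omega, if_neg (fun hc => hne hc.symm),
                    if_pos rfl]
                  ring
                · rw [hF0 _ (fun hc => e1 (eq_of_inSub_childV hvh (not_inSub_self w c1) hc).2)
                      (fun hc => e2 (eq_of_inSub_childV hvh (not_inSub_self w c2) hc).2),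
                    if_neg e1, if_neg e2]
                  ring
            rw [Finset.sum_congr rfl (fun a _ => h1 a), Finset.sum_add_distrib,
              Finset.sum_ite_eq' Finset.univ c1 (fun _ => yanti d x 0),
              Finset.sum_ite_eq' Finset.univ c2 (fun _ => -yanti d x 0)]
            simp
          have hpar0 : F (parentV w) = 0 :=
            hF0 _ (fun hc => not_inSub_self w c1 (inSub_of_parentV hc))
              (fun hc => not_inSub_self w c2 (inSub_of_parentV hc))
          rw [hpar0, hFv, if_pos hvh, hsum, if_neg (show ¬ lvl w = h by omega)]
          simp
        · have hFw : F w = 0 := hF0 w hs1 hs2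
          have hpar0 : F (parentV w) = 0 :=
            hF0 _ (fun hc => hs1 (inSub_of_parentV hc)) (fun hc => hs2 (inSub_of_parentV hc))
          rw [hFw, hpar0]
          by_cases hwh : lvl w < h
          · have hch0 : ∀ a : Fin d, F (childV w a) = 0 := fun a =>
              hF0 _ (fun hc => hwv (eq_of_inSub_childV hwh hs1 hc).1)
                (fun hc => hwv (eq_of_inSub_childV hwh hs2 hc).1)
            rw [if_pos hwh, Finset.sum_congr rfl (fun a _ => hch0 a)]
            simp
          · rw [if_neg hwh]
            simp

/-- For 0 ≤ k ≤ h−1, x ≠ ±1/√d solving the anti-symmetric equation, a vertex v of level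
h−1−k and j ∈ {1,…,d−1} (children j, j+1 of v corresponding to labels j−1, j in `Fin d`),
the pseudo anti-symmetric vector is nonzero and satisfies `Q f = λ f` with
λ = (d/(d+1))(x + 1/(xd)). -/
theorem stmt_4 (d h : ℕ) (hd : 2 ≤ d) (hh : 1 ≤ h) (k : ℕ) (hk : k ≤ h - 1) (x : ℂ)
    (hx1 : x ≠ ((Real.sqrt d : ℝ) : ℂ)⁻¹) (hx2 : x ≠ -((Real.sqrt d : ℝ) : ℂ)⁻¹)
    (hsol : (d : ℂ) ^ (k + 2) * x ^ (2 * k + 4) - (d : ℂ) ^ (k + 2) * x ^ (2 * k + 3)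
      + d * x - 1 = 0)
    (v : Vtx d h) (hv : lvl v = h - 1 - k) (j : ℕ) (hj1 : 1 ≤ j) (hj2 : j ≤ d - 1) :
    fantiX d h k x v ⟨j - 1, by omega⟩ ⟨j, by omega⟩ ≠ 0 ∧
    (Q d h).mulVec (fantiX d h k x v ⟨j - 1, by omega⟩ ⟨j, by omega⟩)
      = (((d : ℂ) / (d + 1)) * (x + 1 / (x * d)))
          • fantiX d h k x v ⟨j - 1, by omega⟩ ⟨j, by omega⟩ := by
  exact main_aux d h hd hh k hk x hx1 hx2 hsol v hv ⟨j - 1, by omega⟩ ⟨j, by omega⟩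
    (by simp only [ne_eq, Fin.mk.injEq]; omega)
end
end

section
/- Let x ∈ ℂ with x ≠ ±1/√d satisfy d^{k+2}x^{2k+4} − d^{k+2}x^{2k+3} + dx − 1 = 0, and set λ = (d/(d+1))·(x + 1/(dx)). Then the vector y = (y_0, y_1, …, y_k) with y_i = d x^{i+2}/(dx² − 1) − 1/((dx² − 1) d^{i} x^{i}) for 0 ≤ i ≤ k is a nonzero eigenvector of S_k with eigenvalue λ. -/
open Matrix

/-- The matrix S_k on states {0,…,k}: S(0,1)=d/(d+1), S(l,l−1)=1/(d+1) and
S(l,l+1)=d/(d+1) for 1 ≤ l ≤ k−1, S(k,k−1)=1/(d+1), S(k,k)=d/(d+1); in particular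
S(0,0)=0, so S_k is substochastic. -/
noncomputable def Smat (d k : ℕ) : Matrix (Fin (k + 1)) (Fin (k + 1)) ℂ := fun l m =>
  if (m : ℕ) = (l : ℕ) + 1 then (d : ℂ) / (d + 1)
  else if (l : ℕ) = (m : ℕ) + 1 then 1 / (d + 1)
  else if l = m ∧ (l : ℕ) = k then (d : ℂ) / (d + 1)
  else 0

/-- The polynomial equation d^{k+2}x^{2k+4} − d^{k+2}x^{2k+3} + dx − 1 = 0. -/
def SEq (d k : ℕ) (x : ℂ) : Prop :=
  (d : ℂ) ^ (k + 2) * x ^ (2 * k + 4) - (d : ℂ) ^ (k + 2) * x ^ (2 * k + 3)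
    + d * x - 1 = 0

lemma sum_ite_nat {n : ℕ} (j : ℕ) (c : ℂ) :
    (∑ m : Fin n, if (m : ℕ) = j then c else 0) = if j < n then c else 0 := by
  split_ifs with h
  · rw [Finset.sum_eq_single (⟨j, h⟩ : Fin n)]
    · simp
    · intro b _ hb
      rw [if_neg]
      intro hc
      exact hb (Fin.ext hc)
    · simp
  · apply Finset.sum_eq_zero
    intro m _
    rw [if_neg]
    intro hc
    exact h (hc ▸ m.isLt)

/-- For x ≠ ±1/√d solving the equation and λ = (d/(d+1))(x + 1/(dx)), the vector
(y_0,…,y_k) with y_i = dx^{i+2}/(dx²−1) − 1/((dx²−1)dⁱxⁱ) is a nonzero eigenvector of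
S_k with eigenvalue λ. -/
theorem stmt_13 (d k : ℕ) (hd : 2 ≤ d) (x : ℂ)
    (hx1 : x ≠ ((Real.sqrt d : ℝ) : ℂ)⁻¹) (hx2 : x ≠ -((Real.sqrt d : ℝ) : ℂ)⁻¹)
    (hsol : SEq d k x) :
    (fun i : Fin (k + 1) => yanti d x (i : ℕ)) ≠ 0 ∧
    (Smat d k).mulVec (fun i : Fin (k + 1) => yanti d x (i : ℕ))
      = (((d : ℂ) / (d + 1)) * (x + 1 / (d * x)))
          • (fun i : Fin (k + 1) => yanti d x (i : ℕ)) := by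
  unfold SEq at hsol
  obtain ⟨lam, hlamdef⟩ : ∃ l : ℂ, ((d : ℂ) / (d + 1)) * (x + 1 / (d * x)) = l := ⟨_, rfl⟩
  rw [hlamdef]
  have hd0 : (d:ℂ) ≠ 0 := Nat.cast_ne_zero.mpr (by omega)
  have hd1 : (d:ℂ) + 1 ≠ 0 := by
    have h : ((d+1:ℕ):ℂ) ≠ 0 := Nat.cast_ne_zero.mpr (by omega)
    push_cast at h
    exact h
  have hx0 : x ≠ 0 := by
    intro h
    rw [h] at hsol
    simp at hsol
  have hA : (d:ℂ) * x^2 - 1 ≠ 0 := by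
    intro h
    set c : ℂ := ((Real.sqrt d : ℝ) : ℂ) with hc
    have hsd : (0:ℝ) < Real.sqrt d := Real.sqrt_pos.mpr (by positivity)
    have hc0 : c ≠ 0 := by
      rw [hc]
      exact_mod_cast ne_of_gt hsd
    have hc2 : c^2 = (d:ℂ) := by
      rw [hc, ← Complex.ofReal_pow, Real.sq_sqrt (by positivity : (0:ℝ) ≤ (d:ℝ))]
      norm_cast
    have hx2q : x^2 = c⁻¹^2 := by
      rw [inv_pow, hc2]
      field_simp
      linear_combination h
    have hmul : (x - c⁻¹) * (x + c⁻¹) = 0 := by linear_combination hx2q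
    rcases mul_eq_zero.mp hmul with h' | h'
    · exact hx1 (sub_eq_zero.mp h')
    · exact hx2 (eq_neg_of_add_eq_zero_left h')
  have hD : ∀ i : ℕ, ((d:ℂ) * x^2 - 1) * (d:ℂ)^i * x^i ≠ 0 := fun i =>
    mul_ne_zero (mul_ne_zero hA (pow_ne_zero _ hd0)) (pow_ne_zero _ hx0)
  have hy : ∀ i : ℕ, yanti d x i * (((d:ℂ) * x^2 - 1) * (d:ℂ)^i * x^i)
      = (d:ℂ)^(i+1) * x^(2*i+2) - 1 := by
    intro i
    have h1 : (d:ℂ)^i ≠ 0 := pow_ne_zero _ hd0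
    have h2 : x^i ≠ 0 := pow_ne_zero _ hx0
    unfold yanti; field_simp; ring
  have hlam : ((d:ℂ)+1) * lam * x = (d:ℂ)*x^2 + 1 := by
    rw [← hlamdef]; field_simp
  have hy0 : yanti d x 0 = 1 := by unfold yanti; field_simp
  have L0 : ((d:ℂ)+1) * lam * yanti d x 0 = (d:ℂ) * yanti d x 1 := by
    apply mul_right_cancel₀ (hD 1)
    linear_combination (((d:ℂ)*x^2-1) * d) * hlam - (d:ℂ) * hy 1
      + (((d:ℂ)+1)*lam*(((d:ℂ)*x^2-1)*(d:ℂ)*x)) * hy0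
  have Lrec : ∀ i : ℕ, ((d:ℂ)+1) * lam * yanti d x (i+1)
      = (d:ℂ) * yanti d x (i+2) + yanti d x i := by
    intro i
    apply mul_right_cancel₀ (hD (i+2))
    linear_combination (yanti d x (i+1) * (((d:ℂ)*x^2-1)) * (d:ℂ)^(i+2) * x^(i+1)) * hlam
      + (((d:ℂ)*x^2+1)*(d:ℂ)) * hy (i+1) + (-(d:ℂ)) * hy (i+2) + (-((d:ℂ)^2*x^2)) * hy i
  have Lend : yanti d x (k+1) = yanti d x k := by
    apply mul_right_cancel₀ (hD (k+1))
    linear_combination hy (k+1) - ((d:ℂ)*x) * hy k + hsol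
  constructor
  · intro h0
    have h1 := congrFun h0 ⟨0, Nat.succ_pos k⟩
    have h2 : yanti d x 0 = 0 := by simpa using h1
    rw [hy0] at h2
    exact one_ne_zero h2
  · funext l
    simp only [Matrix.mulVec, dotProduct, Pi.smul_apply, smul_eq_mul]
    have hterm : ∀ m : Fin (k+1), Smat d k l m * yanti d x (m : ℕ) =
        (if (m : ℕ) = (l : ℕ) + 1 then ((d:ℂ)/(d+1)) * yanti d x ((l:ℕ)+1) else 0)
      + (if (m : ℕ) + 1 = (l : ℕ) then (1/((d:ℂ)+1)) * yanti d x ((l:ℕ)-1) else 0)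
      + (if (m : ℕ) = (l : ℕ) ∧ (l : ℕ) = k then ((d:ℂ)/(d+1)) * yanti d x (l:ℕ) else 0) := by
      intro m
      unfold Smat
      simp only [Fin.ext_iff]
      by_cases h1 : (m:ℕ) = (l:ℕ)+1
      · rw [if_pos h1, if_pos h1, if_neg (by omega), if_neg (by omega), h1]
        ring
      · by_cases h2 : (l:ℕ) = (m:ℕ)+1
        · have hm : (l:ℕ) - 1 = (m:ℕ) := by omega
          rw [if_neg h1, if_pos h2, if_neg h1, if_pos (by omega), if_neg (by omega), hm]
          ring
        · by_cases h3 : (l:ℕ) = (m:ℕ) ∧ (l:ℕ) = k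
          · rw [if_neg h1, if_neg h2, if_pos h3, if_neg h1, if_neg (by omega),
              if_pos ⟨h3.1.symm, h3.2⟩, h3.1]
            ring
          · rw [if_neg h1, if_neg h2, if_neg h3, if_neg h1, if_neg (by omega),
              if_neg (by intro hc; exact h3 ⟨hc.1.symm, hc.2⟩)]
            ring
    rw [Finset.sum_congr rfl (fun m _ => hterm m), Finset.sum_add_distrib,
      Finset.sum_add_distrib, sum_ite_nat]
    by_cases hlk : (l:ℕ) = k
    · have hS1 : ¬ ((l:ℕ)+1 < k+1) := by omega
      have hS3 : (∑ m : Fin (k+1), if (m:ℕ) = (l:ℕ) ∧ (l:ℕ) = k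
          then ((d:ℂ)/(d+1)) * yanti d x (l:ℕ) else 0)
          = ((d:ℂ)/(d+1)) * yanti d x (l:ℕ) := by
        have he : ∀ m : Fin (k+1), ((m:ℕ) = (l:ℕ) ∧ (l:ℕ) = k) = ((m:ℕ) = (l:ℕ)) :=
          fun m => propext ⟨fun h => h.1, fun h => ⟨h, hlk⟩⟩
        simp only [he]
        rw [sum_ite_nat, if_pos l.isLt]
      rw [if_neg hS1, hS3]
      by_cases hl0 : (l:ℕ) = 0
      · have hk0 : k = 0 := by omega
        have hS2 : (∑ m : Fin (k+1), if (m:ℕ)+1 = (l:ℕ)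
            then (1/((d:ℂ)+1)) * yanti d x ((l:ℕ)-1) else 0) = 0 :=
          Finset.sum_eq_zero (fun m _ => if_neg (by omega))
        rw [hS2, hl0]
        have hLe : yanti d x 1 = yanti d x 0 := by
          have h' := Lend
          rw [hk0] at h'
          norm_num at h'
          exact h'
        field_simp
        linear_combination -L0 - (d:ℂ) * hLe
      · obtain ⟨j, hj⟩ : ∃ j, (l:ℕ) = j + 1 := ⟨(l:ℕ)-1, by omega⟩
        have hS2 : (∑ m : Fin (k+1), if (m:ℕ)+1 = (l:ℕ)
            then (1/((d:ℂ)+1)) * yanti d x ((l:ℕ)-1) else 0)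
            = (1/((d:ℂ)+1)) * yanti d x j := by
          have he : ∀ m : Fin (k+1), ((m:ℕ)+1 = (l:ℕ)) = ((m:ℕ) = j) :=
            fun m => propext (by omega)
          simp only [he]
          rw [sum_ite_nat, if_pos (by omega), hj]
          norm_num
        rw [hS2, hj]
        have hke : k = j + 1 := by omega
        have hLe : yanti d x (j+2) = yanti d x (j+1) := by
          have := Lend; rw [hke] at this; exact this
        field_simp
        linear_combination -Lrec j - (d:ℂ) * hLe
    · have hS1 : ((l:ℕ)+1 < k+1) := by omega
      have hS3 : (∑ m : Fin (k+1), if (m:ℕ) = (l:ℕ) ∧ (l:ℕ) = k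
          then ((d:ℂ)/(d+1)) * yanti d x (l:ℕ) else 0) = 0 :=
        Finset.sum_eq_zero (fun m _ => if_neg (by tauto))
      rw [if_pos hS1, hS3]
      by_cases hl0 : (l:ℕ) = 0
      · have hS2 : (∑ m : Fin (k+1), if (m:ℕ)+1 = (l:ℕ)
            then (1/((d:ℂ)+1)) * yanti d x ((l:ℕ)-1) else 0) = 0 :=
          Finset.sum_eq_zero (fun m _ => if_neg (by omega))
        rw [hS2, hl0]
        field_simp
        linear_combination -L0
      · obtain ⟨j, hj⟩ : ∃ j, (l:ℕ) = j + 1 := ⟨(l:ℕ)-1, by omega⟩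
        have hS2 : (∑ m : Fin (k+1), if (m:ℕ)+1 = (l:ℕ)
            then (1/((d:ℂ)+1)) * yanti d x ((l:ℕ)-1) else 0)
            = (1/((d:ℂ)+1)) * yanti d x j := by
          have he : ∀ m : Fin (k+1), ((m:ℕ)+1 = (l:ℕ)) = ((m:ℕ) = j) :=
            fun m => propext (by omega)
          simp only [he]
          rw [sum_ite_nat, if_pos (by omega), hj]
          norm_num
        rw [hS2, hj]
        field_simp
        linear_combination -Lrec j
end
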